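/- arXiv:2012.08380 — 8 statements merged into one kernel-verified Lean document; each statement's English description precedes it below -/
import Mathlib

section
/- Let f : ℝ → ℝ be differentiable with fixed point x* and |f'(x*)| = μ ∈ (0,1). If a sequence satisfies x_{n+1} = f(x_n), x_n → x*, and x_n ≠ x* for all n, then (log |x_n - x*|)/n → log μ. -/
open Filter Topology

theorem stmt1 (f : ℝ → ℝ) (hf : Differentiable ℝ f) (L μ : ℝ)
    (hfix : f L = L) (hμ : |deriv f L| = μ) (hμ0 : 0 < μ) (hμ1 : μ < 1)
    (x : ℕ → ℝ) (hrec : ∀ n, x (n + 1) = f (x n))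
    (hlim : Tendsto x atTop (𝓝 L)) (hne : ∀ n, x n ≠ L) :
    Tendsto (fun n : ℕ => Real.log |x n - L| / n) atTop (𝓝 (Real.log μ)) := by
  set d : ℕ → ℝ := fun n => Real.log |x (n + 1) - L| - Real.log |x n - L| with hd
  have hxne : ∀ n, x n - L ≠ 0 := fun n => sub_ne_zero.mpr (hne n)
  -- slope tendsto
  have hslope : Tendsto (fun n => slope f L (x n)) atTop (𝓝 (deriv f L)) := by
    have h1 : Tendsto (slope f L) (𝓝[≠] L) (𝓝 (deriv f L)) :=
      hasDerivAt_iff_tendsto_slope.mp (hf L).hasDerivAt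
    refine h1.comp ?_
    rw [tendsto_nhdsWithin_iff]
    exact ⟨hlim, Eventually.of_forall fun n => hne n⟩
  have hdμ : Tendsto d atTop (𝓝 (Real.log μ)) := by
    have h2 : Tendsto (fun n => Real.log |slope f L (x n)|) atTop (𝓝 (Real.log μ)) :=
      (Real.continuousAt_log hμ0.ne').tendsto.comp (hμ ▸ hslope.abs)
    refine h2.congr fun n => ?_
    have : slope f L (x n) = (x (n + 1) - L) / (x n - L) := by
      rw [slope_def_field, hrec n, hfix]
    rw [this, abs_div, Real.log_div (abs_ne_zero.mpr (hxne (n + 1))) (abs_ne_zero.mpr (hxne n))]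
  have hces := hdμ.cesaro
  have htel : ∀ n, ∑ i ∈ Finset.range n, d i = Real.log |x n - L| - Real.log |x 0 - L| :=
    fun n => Finset.sum_range_sub (fun k => Real.log |x k - L|) n
  have h3 : Tendsto (fun n : ℕ => (Real.log |x n - L| - Real.log |x 0 - L|) / n) atTop
      (𝓝 (Real.log μ)) := hces.congr fun n => by rw [htel n]; ring
  have h4 : Tendsto (fun n : ℕ => Real.log |x 0 - L| / n) atTop (𝓝 0) :=
    tendsto_const_div_atTop_nhds_zero_nat _
  have := h3.add h4
  rw [add_zero] at this
  refine this.congr fun n => ?_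
  ring
end

section
/- Fix σ, λ > 0, d ∈ ℝ, q ≥ 0 and a phase-type representation (α, T) with t = −T1. Define the map sending a > 2d/σ² to f(a) = (d + √(d² + σ²(2λ + 2q − σ² b(a) t)))/σ², where b(a) = (2λ/σ²) α((a − 2d/σ²)I − T)^{-1}. Then f is monotone increasing in a (i.e., a' > a > 2d/σ² implies f(a') > f(a)), and for all a > 2d/σ², f(a) > max(2d/σ², 0). -/
open Matrix Polynomial

section aux
variable {n : ℕ}

lemma pow_entry_nonneg {N : Matrix (Fin n) (Fin n) ℝ} (hN : ∀ i j, 0 ≤ N i j) :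
    ∀ k i j, 0 ≤ (N ^ k) i j := by
  intro k
  induction k with
  | zero =>
    intro i j
    simp only [pow_zero, Matrix.one_apply]
    split <;> norm_num
  | succ k ih =>
    intro i j
    rw [pow_succ, Matrix.mul_apply]
    exact Finset.sum_nonneg fun m _ => mul_nonneg (ih i m) (hN m j)

lemma pow_rowsum_le {N : Matrix (Fin n) (Fin n) ℝ} (hN : ∀ i j, 0 ≤ N i j) {c : ℝ} (hc : 0 ≤ c)
    (h : ∀ i, ∑ j, N i j ≤ c) : ∀ k i, ∑ j, (N ^ k) i j ≤ c ^ k := by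
  intro k
  induction k with
  | zero => intro i; simp [Matrix.one_apply]
  | succ k ih =>
    intro i
    calc ∑ j, (N ^ (k+1)) i j = ∑ j, ∑ m, (N ^ k) i m * N m j := by
          simp [pow_succ, Matrix.mul_apply]
      _ = ∑ m, (N ^ k) i m * ∑ j, N m j := by
          rw [Finset.sum_comm]; simp [Finset.mul_sum]
      _ ≤ ∑ m, (N ^ k) i m * c :=
          Finset.sum_le_sum fun m _ => mul_le_mul_of_nonneg_left (h m) (pow_entry_nonneg hN k i m)
      _ = (∑ m, (N ^ k) i m) * c := by rw [Finset.sum_mul]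
      _ ≤ c ^ k * c := mul_le_mul_of_nonneg_right (ih i) hc
      _ = c ^ (k+1) := (pow_succ c k).symm


lemma resolvent_props (T : Matrix (Fin n) (Fin n) ℝ)
    (hoff : ∀ i j, i ≠ j → 0 ≤ T i j) (hrow : ∀ i, ∑ j, T i j ≤ 0)
    {s : ℝ} (hs : 0 < s) :
    IsUnit (s • (1 : Matrix (Fin n) (Fin n) ℝ) - T).det ∧
    (∀ i j, 0 ≤ (s • (1 : Matrix (Fin n) (Fin n) ℝ) - T)⁻¹ i j) ∧
    (∀ i, 0 < (s • (1 : Matrix (Fin n) (Fin n) ℝ) - T)⁻¹ i i) := by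
  have hdiag : ∀ i, T i i ≤ 0 := by
    intro i
    have h1 : T i i + ∑ j ∈ Finset.univ.erase i, T i j = ∑ j, T i j :=
      Finset.add_sum_erase _ _ (Finset.mem_univ i)
    have h2 : 0 ≤ ∑ j ∈ Finset.univ.erase i, T i j :=
      Finset.sum_nonneg fun j hj => hoff i j (Ne.symm (Finset.ne_of_mem_erase hj))
    linarith [hrow i]
  set c : ℝ := ∑ i, -T i i with hc_def
  have hc : 0 ≤ c := Finset.sum_nonneg fun i _ => by linarith [hdiag i]
  have hcT : ∀ i, -T i i ≤ c := fun i =>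
    Finset.single_le_sum (f := fun i => -T i i) (fun j _ => by simpa using neg_nonneg.mpr (hdiag j))
      (Finset.mem_univ i)
  set β : ℝ := s + c with hβ_def
  have hβ : 0 < β := by positivity
  set N : Matrix (Fin n) (Fin n) ℝ := c • 1 + T with hN_def
  have hNnn : ∀ i j, 0 ≤ N i j := by
    intro i j
    by_cases hij : i = j
    · subst hij
      simp only [hN_def, Matrix.add_apply, Matrix.smul_apply, Matrix.one_apply_eq, smul_eq_mul,
        mul_one]
      linarith [hcT i]
    · simp only [hN_def, Matrix.add_apply, Matrix.smul_apply, Matrix.one_apply_ne hij,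
        smul_eq_mul, mul_zero, zero_add]
      exact hoff i j hij
  have hNrow : ∀ i, ∑ j, N i j ≤ c := by
    intro i
    have : ∑ j, N i j = c + ∑ j, T i j := by
      simp only [hN_def, Matrix.add_apply, Matrix.smul_apply, smul_eq_mul]
      rw [Finset.sum_add_distrib]
      congr 1
      simp [Matrix.one_apply]
    rw [this]; linarith [hrow i]
  have hMN : s • (1 : Matrix (Fin n) (Fin n) ℝ) - T = β • 1 - N := by
    rw [hN_def, hβ_def]; rw [add_smul]; abel
  have hentry_le : ∀ k i j, (N ^ k) i j ≤ c ^ k := by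
    intro k i j
    have h1 : (N ^ k) i j ≤ ∑ m, (N ^ k) i m := by
      refine Finset.single_le_sum (fun m _ => pow_entry_nonneg hNnn k i m) (Finset.mem_univ j)
    exact h1.trans (pow_rowsum_le hNnn hc hNrow k i)
  have hr : c / β < 1 := by rw [div_lt_one hβ]; linarith
  have hr0 : 0 ≤ c / β := by positivity
  have hgeom : Summable (fun k : ℕ => (1 / β) * (c / β) ^ k) :=
    (summable_geometric_of_lt_one hr0 hr).mul_left _
  have hsum : ∀ i j, Summable (fun k : ℕ => (N ^ k) i j / β ^ (k + 1)) := by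
    intro i j
    refine Summable.of_nonneg_of_le
      (fun k => div_nonneg (pow_entry_nonneg hNnn k i j) (by positivity)) (fun k => ?_) hgeom
    have h1 : (N ^ k) i j / β ^ (k + 1) ≤ c ^ k / β ^ (k + 1) := by
      gcongr
      exact hentry_le k i j
    refine h1.trans_eq ?_
    have hβ0 : β ≠ 0 := hβ.ne'
    rw [div_pow, pow_succ]
    field_simp
  set B : Matrix (Fin n) (Fin n) ℝ :=
    Matrix.of (fun i j => ∑' k : ℕ, (N ^ k) i j / β ^ (k + 1)) with hB_def
  have hBapp : ∀ i j, B i j = ∑' k : ℕ, (N ^ k) i j / β ^ (k + 1) := fun i j => rfl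
  have hBnn : ∀ i j, 0 ≤ B i j := fun i j =>
    tsum_nonneg (fun k => div_nonneg (pow_entry_nonneg hNnn k i j) (by positivity))
  have hBdiag : ∀ i, 1 / β ≤ B i i := by
    intro i
    have h0 : (N ^ 0) i i / β ^ (0 + 1) = 1 / β := by simp
    calc 1 / β = (N ^ 0) i i / β ^ (0 + 1) := h0.symm
      _ ≤ B i i := Summable.le_tsum (hsum i i) 0
          (fun k _ => div_nonneg (pow_entry_nonneg hNnn k i i) (by positivity))
  have hright : (β • 1 - N) * B = 1 := by
    ext i j
    rw [Matrix.mul_apply]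
    have hsplit : ∀ m, ((β • (1 : Matrix (Fin n) (Fin n) ℝ) - N) i m) * B m j
        = β * ((1 : Matrix (Fin n) (Fin n) ℝ) i m * B m j) - N i m * B m j := by
      intro m
      simp only [Matrix.sub_apply, Matrix.smul_apply, smul_eq_mul, sub_mul, mul_assoc]
    rw [Finset.sum_congr rfl (fun m _ => hsplit m), Finset.sum_sub_distrib, ← Finset.mul_sum]
    have hone : ∑ m, (1 : Matrix (Fin n) (Fin n) ℝ) i m * B m j = B i j := by
      simp [Matrix.one_apply, Finset.sum_ite_eq]
    rw [hone]
    set u : ℕ → ℝ := fun k => (N ^ k) i j / β ^ k with hu_def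
    have huv : ∀ k, u k = β * ((N ^ k) i j / β ^ (k + 1)) := by
      intro k
      rw [hu_def, pow_succ]
      field_simp
    have hu_sum : Summable u := by
      rw [show u = fun k => β * ((N ^ k) i j / β ^ (k + 1)) from funext huv]
      exact (hsum i j).mul_left β
    have hA : β * B i j = ∑' k : ℕ, u k := by
      rw [hBapp, ← tsum_mul_left]
      exact tsum_congr fun k => (huv k).symm
    have hC : ∑ m, N i m * B m j = ∑' k : ℕ, u (k + 1) := by
      have h1 : ∀ m, N i m * B m j = ∑' k : ℕ, N i m * ((N ^ k) m j / β ^ (k + 1)) := by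
        intro m
        rw [hBapp, tsum_mul_left]
      rw [Finset.sum_congr rfl (fun m _ => h1 m)]
      rw [← Summable.tsum_finsetSum (fun m _ => (hsum m j).mul_left (N i m))]
      refine tsum_congr fun k => ?_
      have h2 : ∑ m, N i m * ((N ^ k) m j / β ^ (k + 1))
          = (∑ m, N i m * (N ^ k) m j) / β ^ (k + 1) := by
        rw [Finset.sum_div]
        exact Finset.sum_congr rfl fun m _ => (mul_div_assoc _ _ _).symm
      have h3 : (N ^ (k + 1)) i j = ∑ m, N i m * (N ^ k) m j := by
        rw [pow_succ', Matrix.mul_apply]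
      rw [h2]
      show _ = (N ^ (k + 1)) i j / β ^ (k + 1)
      rw [h3]
    rw [hA, hC, Summable.tsum_eq_zero_add hu_sum]
    simp [hu_def]
  have hrfin : (s • (1 : Matrix (Fin n) (Fin n) ℝ) - T) * B = 1 := by rw [hMN]; exact hright
  have hdet : IsUnit (s • (1 : Matrix (Fin n) (Fin n) ℝ) - T).det :=
    Matrix.isUnit_det_of_right_inverse hrfin
  have hinv : (s • (1 : Matrix (Fin n) (Fin n) ℝ) - T)⁻¹ = B := Matrix.inv_eq_right_inv hrfin
  refine ⟨hdet, ?_, ?_⟩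
  · rw [hinv]; exact hBnn
  · intro i
    rw [hinv]
    exact lt_of_lt_of_le (by positivity) (hBdiag i)


end aux

lemma detnegT {n : ℕ} (T : Matrix (Fin n) (Fin n) ℝ)
    (heig : ∀ μ ∈ spectrum ℂ (T.map (Complex.ofReal : ℝ → ℂ)), μ.re < 0) :
    IsUnit (Matrix.det (-T)) := by
  rw [isUnit_iff_ne_zero]
  intro h0
  have hdT : Matrix.det T = 0 := by
    have := Matrix.det_neg T
    rw [this] at h0
    rcases mul_eq_zero.mp h0 with h | h
    · exact absurd h (pow_ne_zero _ (by norm_num))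
    · exact h
  have hC : (T.map (Complex.ofReal : ℝ → ℂ)).det = 0 := by
    have : T.map (Complex.ofReal : ℝ → ℂ) = T.map (Complex.ofRealHom : ℝ →+* ℂ) := rfl
    rw [this]
    show ((Complex.ofRealHom : ℝ →+* ℂ).mapMatrix T).det = 0
    rw [← RingHom.map_det, hdT, map_zero]
  have hnu : ¬ IsUnit (T.map (Complex.ofReal : ℝ → ℂ)) := by
    rw [Matrix.isUnit_iff_isUnit_det, hC]
    exact not_isUnit_zero
  have h0mem : (0 : ℂ) ∈ spectrum ℂ (T.map (Complex.ofReal : ℝ → ℂ)) :=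
    spectrum.zero_mem (R := ℂ) hnu
  have := heig 0 h0mem
  simp at this

lemma key {n : ℕ} (T : Matrix (Fin n) (Fin n) ℝ)
    (hoff : ∀ i j, i ≠ j → 0 ≤ T i j) (hrow : ∀ i, ∑ j, T i j ≤ 0)
    (heig : ∀ μ ∈ spectrum ℂ (T.map (Complex.ofReal : ℝ → ℂ)), μ.re < 0)
    (α : Fin n → ℝ) (hα0 : ∀ i, 0 ≤ α i) (hα1 : ∑ i, α i = 1)
    (t : Fin n → ℝ) (ht : t = (-T).mulVec 1) :
    (∀ s : ℝ, 0 < s → α ⬝ᵥ ((s • (1 : Matrix (Fin n) (Fin n) ℝ) - T)⁻¹ *ᵥ t) < 1) ∧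
    (∀ s s' : ℝ, 0 < s → s < s' →
      α ⬝ᵥ ((s' • (1 : Matrix (Fin n) (Fin n) ℝ) - T)⁻¹ *ᵥ t) <
      α ⬝ᵥ ((s • (1 : Matrix (Fin n) (Fin n) ℝ) - T)⁻¹ *ᵥ t)) := by
  set M : ℝ → Matrix (Fin n) (Fin n) ℝ := fun s => s • 1 - T with hM_def
  set R : ℝ → Matrix (Fin n) (Fin n) ℝ := fun s => (M s)⁻¹ with hR_def
  set h : ℝ → ℝ := fun s => α ⬝ᵥ (R s *ᵥ t) with hh_def
  have htnn : ∀ i, 0 ≤ t i := by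
    intro i
    rw [ht]
    simp only [Matrix.mulVec, dotProduct, Matrix.neg_apply, Pi.one_apply, mul_one]
    rw [Finset.sum_neg_distrib]
    linarith [hrow i]
  -- existence of a positive α entry
  have hα_pos : ∃ i, 0 < α i := by
    by_contra hcon
    push_neg at hcon
    have h1 : ∑ i, α i ≤ 0 := Finset.sum_nonpos fun i _ => hcon i
    rw [hα1] at h1
    linarith
  -- h s < 1 for s > 0
  have hlt1 : ∀ s : ℝ, 0 < s → h s < 1 := by
    intro s hs
    obtain ⟨hdet, hRnn, hRdiag⟩ := resolvent_props T hoff hrow hs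
    have hMv1 : M s *ᵥ (1 : Fin n → ℝ) = s • (1 : Fin n → ℝ) + t := by
      rw [hM_def]
      simp only
      rw [Matrix.sub_mulVec, Matrix.smul_mulVec, Matrix.one_mulVec]
      rw [ht, Matrix.neg_mulVec]
      abel
    have hone : (1 : Fin n → ℝ) = s • (R s *ᵥ (1 : Fin n → ℝ)) + R s *ᵥ t := by
      have h1 : R s *ᵥ (M s *ᵥ (1 : Fin n → ℝ)) = (1 : Fin n → ℝ) := by
        rw [Matrix.mulVec_mulVec, Matrix.nonsing_inv_mul _ hdet, Matrix.one_mulVec]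
      calc (1 : Fin n → ℝ) = R s *ᵥ (M s *ᵥ (1 : Fin n → ℝ)) := h1.symm
        _ = R s *ᵥ (s • (1 : Fin n → ℝ) + t) := by rw [hMv1]
        _ = s • (R s *ᵥ (1 : Fin n → ℝ)) + R s *ᵥ t := by
            rw [Matrix.mulVec_add, Matrix.mulVec_smul]
    have hαone : α ⬝ᵥ (1 : Fin n → ℝ) = 1 := by
      simp [dotProduct, hα1]
    have hsum : (1 : ℝ) = s * (α ⬝ᵥ (R s *ᵥ (1 : Fin n → ℝ))) + h s := by
      conv_lhs => rw [← hαone, hone]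
      rw [dotProduct_add, dotProduct_smul]
      simp [hh_def]
    have hpos : 0 < α ⬝ᵥ (R s *ᵥ (1 : Fin n → ℝ)) := by
      obtain ⟨i0, hi0⟩ := hα_pos
      have hRv : ∀ i, R s i i ≤ (R s *ᵥ (1 : Fin n → ℝ)) i := by
        intro i
        simp only [Matrix.mulVec, dotProduct, Pi.one_apply, mul_one]
        exact Finset.single_le_sum (fun k _ => hRnn i k) (Finset.mem_univ i)
      refine Finset.sum_pos' (fun i _ => mul_nonneg (hα0 i) ?_) ⟨i0, Finset.mem_univ i0, ?_⟩
      · exact le_trans (le_of_lt (hRdiag i)) (hRv i)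
      · exact mul_pos hi0 (lt_of_lt_of_le (hRdiag i0) (hRv i0))
    nlinarith
  -- weak monotonicity
  have hweak : ∀ s s' : ℝ, 0 < s → s ≤ s' → h s' ≤ h s := by
    intro s s' hs hss
    have hs' : 0 < s' := lt_of_lt_of_le hs hss
    obtain ⟨hdet, hRnn, _⟩ := resolvent_props T hoff hrow hs
    obtain ⟨hdet', hRnn', _⟩ := resolvent_props T hoff hrow hs'
    have hres : R s - R s' = (s' - s) • (R s * R s') := by
      have e1 : (s' - s) • (1 : Matrix (Fin n) (Fin n) ℝ) = M s' - M s := by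
        rw [hM_def]
        simp only
        rw [sub_smul]
        abel
      have h2 : R s * ((M s' - M s) * R s') = R s - R s' := by
        rw [Matrix.sub_mul, Matrix.mul_sub, Matrix.mul_nonsing_inv _ hdet', Matrix.mul_one,
          ← Matrix.mul_assoc, Matrix.nonsing_inv_mul _ hdet, Matrix.one_mul]
      rw [← h2, ← e1, Matrix.smul_mul, Matrix.one_mul, Matrix.mul_smul]
    have hdiff : h s - h s' = (s' - s) * (α ⬝ᵥ ((R s * R s') *ᵥ t)) := by
      rw [hh_def]
      simp only
      rw [← dotProduct_sub, ← Matrix.sub_mulVec, hres,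
        Matrix.smul_mulVec, dotProduct_smul, smul_eq_mul]
    have hnn : 0 ≤ α ⬝ᵥ ((R s * R s') *ᵥ t) := by
      refine Finset.sum_nonneg fun i _ => mul_nonneg (hα0 i) ?_
      show 0 ≤ ∑ j, (R s * R s') i j * t j
      refine Finset.sum_nonneg fun j _ => mul_nonneg ?_ (htnn j)
      rw [Matrix.mul_apply]
      exact Finset.sum_nonneg fun m _ => mul_nonneg (hRnn i m) (hRnn' m j)
    nlinarith
  refine ⟨hlt1, ?_⟩
  -- strict monotonicity
  intro s s' hs hss'
  have hs' : 0 < s' := hs.trans hss'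
  rcases lt_or_ge (h s') (h s) with hlt | hge
  · exact hlt
  have heq : h s' = h s := le_antisymm (hweak s s' hs (le_of_lt hss')) hge
  exfalso
  -- h is constant on [s, s']
  have hconst : ∀ x ∈ Set.Icc s s', h x = h s := by
    intro x hx
    have h1 : h x ≤ h s := hweak s x hs hx.1
    have h2 : h s' ≤ h x := hweak x s' (lt_of_lt_of_le hs hx.1) hx.2
    rw [heq] at h2
    exact le_antisymm h1 h2
  -- polynomial setup
  set c0 : ℝ := h s with hc0_def
  set Mp : Matrix (Fin n) (Fin n) ℝ[X] := (Polynomial.X : ℝ[X]) • (1 : Matrix (Fin n) (Fin n) ℝ[X]) - T.map (Polynomial.C : ℝ → ℝ[X]) with hMp_def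
  have hmap : ∀ x : ℝ, Mp.map (Polynomial.evalRingHom x) = M x := by
    intro x
    ext i j
    by_cases hij : i = j
    · subst hij
      simp [hMp_def, hM_def, Matrix.map_apply, Matrix.sub_apply, Matrix.smul_apply,
        Matrix.one_apply_eq]
    · simp [hMp_def, hM_def, Matrix.map_apply, Matrix.sub_apply, Matrix.smul_apply,
        Matrix.one_apply_ne hij]
  set P : ℝ[X] := (∑ i, ∑ j, Polynomial.C (α i) * Mp.adjugate i j * Polynomial.C (t j))
      - Polynomial.C c0 * Mp.det with hP_def
  have hevalP : ∀ x : ℝ, P.eval x =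
      (∑ i, ∑ j, α i * (M x).adjugate i j * t j) - c0 * (M x).det := by
    intro x
    have hadjx : ∀ i j, (M x).adjugate i j = Polynomial.eval x (Mp.adjugate i j) := by
      intro i j
      have h1 : (Polynomial.evalRingHom x).mapMatrix Mp.adjugate
          = Matrix.adjugate ((Polynomial.evalRingHom x).mapMatrix Mp) :=
        RingHom.map_adjugate _ _
      have h2 : (Polynomial.evalRingHom x).mapMatrix Mp = M x := hmap x
      rw [h2] at h1
      rw [← h1]
      simp [RingHom.mapMatrix_apply, Matrix.map_apply]
    have hdetx : (M x).det = Polynomial.eval x Mp.det := by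
      have h1 : (Polynomial.evalRingHom x) Mp.det
          = Matrix.det ((Polynomial.evalRingHom x).mapMatrix Mp) := RingHom.map_det _ _
      have h2 : (Polynomial.evalRingHom x).mapMatrix Mp = M x := hmap x
      rw [h2] at h1
      rw [← h1]
      simp
    rw [hP_def, eval_sub, eval_mul, eval_C, ← hdetx]
    congr 1
    rw [eval_finset_sum]
    refine Finset.sum_congr rfl fun i _ => ?_
    rw [eval_finset_sum]
    refine Finset.sum_congr rfl fun j _ => ?_
    rw [eval_mul, eval_mul, eval_C, eval_C, ← hadjx i j]
  -- relation between eval and h on the interval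
  have hroot : ∀ x ∈ Set.Icc s s', P.eval x = 0 := by
    intro x hx
    have hx0 : 0 < x := lt_of_lt_of_le hs hx.1
    obtain ⟨hdet, _, _⟩ := resolvent_props T hoff hrow hx0
    have hadj : (M x).adjugate = (M x).det • R x := by
      calc (M x).adjugate = (R x * M x) * (M x).adjugate := by
            rw [Matrix.nonsing_inv_mul _ hdet, Matrix.one_mul]
        _ = R x * (M x * (M x).adjugate) := by rw [Matrix.mul_assoc]
        _ = R x * ((M x).det • 1) := by rw [Matrix.mul_adjugate]
        _ = (M x).det • R x := by rw [Matrix.mul_smul, Matrix.mul_one]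
    have hsum_eq : (∑ i, ∑ j, α i * (M x).adjugate i j * t j) = (M x).det * h x := by
      rw [hadj, hh_def]
      simp only [Matrix.smul_apply, smul_eq_mul, dotProduct, Matrix.mulVec]
      rw [Finset.mul_sum]
      refine Finset.sum_congr rfl fun i _ => ?_
      rw [Finset.mul_sum, Finset.mul_sum]
      refine Finset.sum_congr rfl fun j _ => ?_
      ring
    rw [hevalP x, hsum_eq, hconst x hx]
    ring
  -- P is the zero polynomial
  have hP0 : P = 0 := by
    refine Polynomial.eq_zero_of_infinite_isRoot P ?_
    refine Set.Infinite.mono ?_ (Set.Icc_infinite hss')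
    intro x hx
    exact hroot x hx
  -- evaluate at 0
  have hM0 : M 0 = -T := by
    rw [hM_def]; simp
  have hdet0 : IsUnit (M 0).det := by rw [hM0]; exact detnegT T heig
  have hR0t : R 0 *ᵥ t = (1 : Fin n → ℝ) := by
    rw [hR_def]
    simp only
    rw [ht, hM0]
    rw [Matrix.mulVec_mulVec, Matrix.nonsing_inv_mul _ (by rw [← hM0] at *; exact hdet0),
      Matrix.one_mulVec]
  have hh0 : h 0 = 1 := by
    rw [hh_def]
    simp only
    rw [hR0t]
    simp [dotProduct, hα1]
  have heval0 : (0 : ℝ) = (M 0).det * h 0 - c0 * (M 0).det := by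
    have h1 : P.eval 0 = 0 := by rw [hP0]; simp
    rw [hevalP 0] at h1
    have hadj : (M 0).adjugate = (M 0).det • R 0 := by
      calc (M 0).adjugate = (R 0 * M 0) * (M 0).adjugate := by
            rw [Matrix.nonsing_inv_mul _ hdet0, Matrix.one_mul]
        _ = R 0 * (M 0 * (M 0).adjugate) := by rw [Matrix.mul_assoc]
        _ = R 0 * ((M 0).det • 1) := by rw [Matrix.mul_adjugate]
        _ = (M 0).det • R 0 := by rw [Matrix.mul_smul, Matrix.mul_one]
    have hsum_eq : (∑ i, ∑ j, α i * (M 0).adjugate i j * t j) = (M 0).det * h 0 := by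
      rw [hadj, hh_def]
      simp only [Matrix.smul_apply, smul_eq_mul, dotProduct, Matrix.mulVec]
      rw [Finset.mul_sum]
      refine Finset.sum_congr rfl fun i _ => ?_
      rw [Finset.mul_sum, Finset.mul_sum]
      refine Finset.sum_congr rfl fun j _ => ?_
      ring
    rw [hsum_eq] at h1
    linarith
  rw [hh0, mul_one] at heval0
  have hdetne : (M 0).det ≠ 0 := hdet0.ne_zero
  have hc01 : c0 = 1 := by
    have : (M 0).det * (1 - c0) = 0 := by ring_nf; linarith [heval0]
    rcases mul_eq_zero.mp this with h | h
    · exact absurd h hdetne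
    · linarith
  have := hlt1 s hs
  rw [← hc0_def] at this
  linarith

theorem stmt7 (n : ℕ) (σ lam d q : ℝ) (hσ : 0 < σ) (hlam : 0 < lam) (hq : 0 ≤ q)
    (T : Matrix (Fin n) (Fin n) ℝ)
    (hoff : ∀ i j, i ≠ j → 0 ≤ T i j) (hrow : ∀ i, ∑ j, T i j ≤ 0)
    (heig : ∀ μ ∈ spectrum ℂ (T.map (Complex.ofReal : ℝ → ℂ)), μ.re < 0)
    (α : Fin n → ℝ) (hα0 : ∀ i, 0 ≤ α i) (hα1 : ∑ i, α i = 1)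
    (t : Fin n → ℝ) (ht : t = (-T).mulVec 1)
    (b : ℝ → Fin n → ℝ)
    (hb : ∀ a : ℝ, b a = (2 * lam / σ ^ 2) •
      Matrix.vecMul α ((a - 2 * d / σ ^ 2) • (1 : Matrix (Fin n) (Fin n) ℝ) - T)⁻¹)
    (f : ℝ → ℝ)
    (hf : ∀ a : ℝ, f a =
      (d + Real.sqrt (d ^ 2 + σ ^ 2 * (2 * lam + 2 * q - σ ^ 2 * (b a ⬝ᵥ t)))) / σ ^ 2) :
    (∀ a a' : ℝ, 2 * d / σ ^ 2 < a → a < a' → f a < f a') ∧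
    (∀ a : ℝ, 2 * d / σ ^ 2 < a → max (2 * d / σ ^ 2) 0 < f a) := by
  obtain ⟨hlt1, hmono⟩ := key T hoff hrow heig α hα0 hα1 t ht
  have hσ2 : (0 : ℝ) < σ ^ 2 := by positivity
  set g : ℝ → ℝ := fun s => α ⬝ᵥ ((s • (1 : Matrix (Fin n) (Fin n) ℝ) - T)⁻¹ *ᵥ t) with hg_def
  have hbt : ∀ a : ℝ, σ ^ 2 * (b a ⬝ᵥ t) = 2 * lam * g (a - 2 * d / σ ^ 2) := by
    intro a
    rw [hb a, smul_dotProduct, ← Matrix.dotProduct_mulVec, smul_eq_mul]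
    rw [hg_def]
    field_simp
  set E : ℝ → ℝ := fun a => d ^ 2 + σ ^ 2 * (2 * lam + 2 * q - σ ^ 2 * (b a ⬝ᵥ t)) with hE_def
  have hEgt : ∀ a : ℝ, 2 * d / σ ^ 2 < a → d ^ 2 < E a := by
    intro a ha
    have hs : 0 < a - 2 * d / σ ^ 2 := by linarith
    have h1 : g (a - 2 * d / σ ^ 2) < 1 := hlt1 _ hs
    have h2 : E a = d ^ 2 + σ ^ 2 * (2 * lam + 2 * q - 2 * lam * g (a - 2 * d / σ ^ 2)) := by
      rw [hE_def]
      simp only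
      rw [hbt a]
    rw [h2]
    have hpos : 0 < 2 * lam + 2 * q - 2 * lam * g (a - 2 * d / σ ^ 2) := by nlinarith
    nlinarith [mul_pos hσ2 hpos]
  have hfE : ∀ a : ℝ, f a = (d + Real.sqrt (E a)) / σ ^ 2 := fun a => hf a
  constructor
  · intro a a' ha haa'
    have ha' : 2 * d / σ ^ 2 < a' := ha.trans haa'
    have hs : 0 < a - 2 * d / σ ^ 2 := by linarith
    have hEE : E a < E a' := by
      have h1 : g (a' - 2 * d / σ ^ 2) < g (a - 2 * d / σ ^ 2) :=
        hmono _ _ hs (by linarith)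
      have h2 : E a = d ^ 2 + σ ^ 2 * (2 * lam + 2 * q - 2 * lam * g (a - 2 * d / σ ^ 2)) := by
        rw [hE_def]; simp only; rw [hbt a]
      have h3 : E a' = d ^ 2 + σ ^ 2 * (2 * lam + 2 * q - 2 * lam * g (a' - 2 * d / σ ^ 2)) := by
        rw [hE_def]; simp only; rw [hbt a']
      rw [h2, h3]
      have hpos : 0 < 2 * lam * (g (a - 2 * d / σ ^ 2) - g (a' - 2 * d / σ ^ 2)) :=
        mul_pos (by linarith) (sub_pos.mpr h1)
      nlinarith [mul_pos hσ2 hpos]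
    have hsqrt : Real.sqrt (E a) < Real.sqrt (E a') := by
      refine Real.sqrt_lt_sqrt ?_ hEE
      have := hEgt a ha
      nlinarith [sq_nonneg d]
    rw [hfE a, hfE a']
    gcongr
  · intro a ha
    have h1 : |d| < Real.sqrt (E a) := by
      have h2 : Real.sqrt (d ^ 2) < Real.sqrt (E a) :=
        Real.sqrt_lt_sqrt (sq_nonneg d) (hEgt a ha)
      rwa [Real.sqrt_sq_eq_abs] at h2
    have h3 : (d + |d|) / σ ^ 2 < f a := by
      rw [hfE a]
      gcongr
    refine lt_of_le_of_lt ?_ h3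
    rcases le_or_gt 0 d with hd | hd
    · have : |d| = d := abs_of_nonneg hd
      rw [this]
      have h4 : (d + d) / σ ^ 2 = 2 * d / σ ^ 2 := by ring
      rw [h4]
      exact max_le le_rfl (by positivity)
    · have : |d| = -d := abs_of_neg hd
      rw [this]
      have h4 : (d + -d) / σ ^ 2 = 0 := by ring
      rw [h4]
      refine max_le ?_ le_rfl
      have : 2 * d / σ ^ 2 < 0 := by
        apply div_neg_of_neg_of_pos (by linarith) hσ2
      linarith
end

section
/- With the setup of the iterative scheme f(a) = (d + √(d² + σ²(2λ + 2q − 2λ α((a − 2d/σ²)I − T)^{-1} t)))/σ² on (2d/σ², ∞): any monotone sequence a_{n} = f(a_{n-1}) starting from a_0 > 2d/σ² is bounded (it satisfies max(2d/σ²,0) < a_n < (d + √(d² + 2σ²(λ+q)))/σ² for n ≥ 1) and hence converges to a fixed point of f. -/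
open Matrix

open Filter Topology



lemma aux_entry {n : ℕ} (T : Matrix (Fin n) (Fin n) ℝ) (s : ℝ) (x : Fin n → ℝ) (i : Fin n) :
    ((s • (1 : Matrix (Fin n) (Fin n) ℝ) - T).mulVec x) i = s * x i - ∑ j, T i j * x j := by
  rw [Matrix.sub_mulVec]
  simp [Matrix.smul_mulVec, Matrix.one_mulVec, Matrix.mulVec, dotProduct]

lemma aux_min {n : ℕ} (T : Matrix (Fin n) (Fin n) ℝ)
    (hoff : ∀ i j, i ≠ j → 0 ≤ T i j) (hrow : ∀ i, ∑ j, T i j ≤ 0)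
    {s : ℝ} (hs : 0 < s) {x b : Fin n → ℝ}
    (hxb : (s • (1 : Matrix (Fin n) (Fin n) ℝ) - T).mulVec x = b)
    {i : Fin n} (hmin : ∀ j, x i ≤ x j) (hxi : x i ≤ 0) : b i ≤ s * x i := by
  have hb : s * x i - ∑ j, T i j * x j = b i := by
    rw [← aux_entry T s x i, hxb]
  have h1 : ∀ j, T i j * x i ≤ T i j * x j := by
    intro j
    rcases eq_or_ne j i with h | h
    · subst h; rfl
    · exact mul_le_mul_of_nonneg_left (hmin j) (hoff i j (Ne.symm h))
  have h2 : (∑ j, T i j) * x i ≤ ∑ j, T i j * x j := by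
    rw [Finset.sum_mul]
    exact Finset.sum_le_sum fun j _ => h1 j
  have h3 : 0 ≤ (∑ j, T i j) * x i := by nlinarith [hrow i, hxi]
  linarith

lemma aux_nonneg {n : ℕ} (T : Matrix (Fin n) (Fin n) ℝ)
    (hoff : ∀ i j, i ≠ j → 0 ≤ T i j) (hrow : ∀ i, ∑ j, T i j ≤ 0)
    {s : ℝ} (hs : 0 < s) {x b : Fin n → ℝ}
    (hxb : (s • (1 : Matrix (Fin n) (Fin n) ℝ) - T).mulVec x = b)
    (hb : ∀ i, 0 ≤ b i) : ∀ i, 0 ≤ x i := by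
  intro i
  obtain ⟨i0, -, hmin⟩ := Finset.exists_min_image Finset.univ x ⟨i, Finset.mem_univ i⟩
  by_contra h
  push_neg at h
  have hxi0 : x i0 ≤ 0 := le_of_lt (lt_of_le_of_lt (hmin i (Finset.mem_univ i)) h)
  have := aux_min T hoff hrow hs hxb (fun j => hmin j (Finset.mem_univ j)) hxi0
  have hb0 := hb i0
  have hxi0' : x i0 < 0 := lt_of_le_of_lt (hmin i (Finset.mem_univ i)) h
  nlinarith

lemma aux_pos {n : ℕ} (T : Matrix (Fin n) (Fin n) ℝ)
    (hoff : ∀ i j, i ≠ j → 0 ≤ T i j) (hrow : ∀ i, ∑ j, T i j ≤ 0)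
    {s : ℝ} (hs : 0 < s) {x b : Fin n → ℝ}
    (hxb : (s • (1 : Matrix (Fin n) (Fin n) ℝ) - T).mulVec x = b)
    (hb : ∀ i, 0 < b i) : ∀ i, 0 < x i := by
  intro i
  obtain ⟨i0, -, hmin⟩ := Finset.exists_min_image Finset.univ x ⟨i, Finset.mem_univ i⟩
  by_contra h
  push_neg at h
  have hxi0 : x i0 ≤ 0 := le_trans (hmin i (Finset.mem_univ i)) h
  have := aux_min T hoff hrow hs hxb (fun j => hmin j (Finset.mem_univ j)) hxi0
  have hb0 := hb i0
  nlinarith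

lemma aux_inj {n : ℕ} (T : Matrix (Fin n) (Fin n) ℝ)
    (hoff : ∀ i j, i ≠ j → 0 ≤ T i j) (hrow : ∀ i, ∑ j, T i j ≤ 0)
    {s : ℝ} (hs : 0 < s) {x : Fin n → ℝ}
    (hxb : (s • (1 : Matrix (Fin n) (Fin n) ℝ) - T).mulVec x = 0) : x = 0 := by
  have h1 : ∀ i, 0 ≤ x i := aux_nonneg T hoff hrow hs hxb (fun i => le_refl 0)
  have hneg : (s • (1 : Matrix (Fin n) (Fin n) ℝ) - T).mulVec (-x) = 0 := by
    rw [Matrix.mulVec_neg, hxb, neg_zero]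
  have h2 : ∀ i, 0 ≤ -x i := by
    have := aux_nonneg T hoff hrow hs hneg (fun i => le_refl 0)
    simpa using this
  funext i
  have := h1 i; have := h2 i
  simp only [Pi.zero_apply]; linarith

lemma aux_det {n : ℕ} (T : Matrix (Fin n) (Fin n) ℝ)
    (hoff : ∀ i j, i ≠ j → 0 ≤ T i j) (hrow : ∀ i, ∑ j, T i j ≤ 0)
    {s : ℝ} (hs : 0 < s) : (s • (1 : Matrix (Fin n) (Fin n) ℝ) - T).det ≠ 0 := by
  intro h
  obtain ⟨v, hv, hMv⟩ := Matrix.exists_mulVec_eq_zero_iff.mpr h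
  exact hv (aux_inj T hoff hrow hs hMv)

lemma aux_upos {n : ℕ} (T : Matrix (Fin n) (Fin n) ℝ)
    (hoff : ∀ i j, i ≠ j → 0 ≤ T i j) (hrow : ∀ i, ∑ j, T i j ≤ 0)
    (hdetT : T.det ≠ 0) {s : ℝ} (hs : 0 < s) {u : Fin n → ℝ}
    (hu0 : ∀ i, 0 ≤ u i)
    (hMu : (s • (1 : Matrix (Fin n) (Fin n) ℝ) - T).mulVec u = (-T).mulVec 1) :
    ∀ i, 0 < u i := by
  classical
  by_contra hc
  push_neg at hc
  obtain ⟨i0, hi0'⟩ := hc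
  have hi0 : u i0 = 0 := le_antisymm hi0' (hu0 i0)
  -- key equation at any i with u i = 0
  have hkey : ∀ i, u i = 0 → ∑ j, T i j * u j = ∑ j, T i j := by
    intro i hi
    have h := congrFun hMu i
    rw [aux_entry T s u i] at h
    have hrhs : ((-T).mulVec (1 : Fin n → ℝ)) i = -∑ j, T i j := by
      simp [Matrix.mulVec, dotProduct]
    rw [hrhs, hi] at h
    linarith
  -- claim1 : rows in S have zero entries outside S, and claim2 : sub-row-sums are 0
  have claim : ∀ i, u i = 0 → (∀ j, u j ≠ 0 → T i j = 0) ∧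
      ∑ j ∈ Finset.univ.filter (fun j => u j = 0), T i j = 0 := by
    intro i hi
    have hk := hkey i hi
    have hsplit : ∑ j, T i j * u j = ∑ j ∈ Finset.univ.filter (fun j => u j ≠ 0), T i j * u j := by
      rw [← Finset.sum_filter_add_sum_filter_not Finset.univ (fun j => u j ≠ 0) (fun j => T i j * u j)]
      have : ∑ j ∈ Finset.univ.filter (fun j => ¬ u j ≠ 0), T i j * u j = 0 := by
        apply Finset.sum_eq_zero
        intro j hj
        simp only [Finset.mem_filter, not_not] at hj
        rw [hj.2, mul_zero]
      rw [this, add_zero]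
    have hA : 0 ≤ ∑ j ∈ Finset.univ.filter (fun j => u j ≠ 0), T i j * u j := by
      apply Finset.sum_nonneg
      intro j hj
      simp only [Finset.mem_filter] at hj
      have hij : i ≠ j := by
        intro h; exact hj.2 (h ▸ hi)
      exact mul_nonneg (hoff i j hij) (hu0 j)
    have hAB : ∑ j ∈ Finset.univ.filter (fun j => u j ≠ 0), T i j * u j = ∑ j, T i j := by
      rw [← hsplit]; exact hk
    have hzero : ∑ j ∈ Finset.univ.filter (fun j => u j ≠ 0), T i j * u j = 0 :=
      le_antisymm (hAB ▸ hrow i) hA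
    have hterm : ∀ j ∈ Finset.univ.filter (fun j => u j ≠ 0), T i j * u j = 0 := by
      refine (Finset.sum_eq_zero_iff_of_nonneg ?_).mp hzero
      intro j hj
      simp only [Finset.mem_filter] at hj
      have hij : i ≠ j := fun h => hj.2 (h ▸ hi)
      exact mul_nonneg (hoff i j hij) (hu0 j)
    constructor
    · intro j hj
      have := hterm j (by simp [hj])
      have huj : 0 < u j := lt_of_le_of_ne (hu0 j) (Ne.symm hj)
      exact (mul_eq_zero.mp this).resolve_right (ne_of_gt huj)
    · have hTsum : ∑ j, T i j = 0 := by rw [← hAB, hzero]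
      have hout : ∑ j ∈ Finset.univ.filter (fun j => ¬ u j = 0), T i j = 0 := by
        apply Finset.sum_eq_zero
        intro j hj
        simp only [Finset.mem_filter] at hj
        have := hterm j (by simp [hj.2])
        have huj : 0 < u j := lt_of_le_of_ne (hu0 j) (Ne.symm hj.2)
        exact (mul_eq_zero.mp this).resolve_right (ne_of_gt huj)
      have := Finset.sum_filter_add_sum_filter_not Finset.univ (fun j => u j = 0) (fun j => T i j)
      rw [hout, add_zero] at this
      rw [this]; exact hTsum
  -- the submatrix on S := {i | u i = 0}
  set B : Matrix {i : Fin n // u i = 0} {i : Fin n // u i = 0} ℝ :=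
    Matrix.of (fun i j => T i.1 j.1) with hB
  have hB1 : B.mulVec 1 = 0 := by
    funext i
    have h2 := (claim i.1 i.2).2
    simp only [Matrix.mulVec, dotProduct, Pi.one_apply, mul_one, Pi.zero_apply, hB,
      Matrix.of_apply]
    have hsub : ∑ j ∈ Finset.univ.filter (fun j => u j = 0), T i.1 j
        = ∑ x : {i : Fin n // u i = 0}, T i.1 x.1 :=
      Finset.sum_subtype _ (by simp) (fun j => T i.1 j)
    exact hsub.symm.trans h2
  have hone : (1 : {i : Fin n // u i = 0} → ℝ) ≠ 0 := by
    intro h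
    have := congrFun h ⟨i0, hi0⟩
    norm_num at this
  have hdetB : B.det = 0 := Matrix.exists_mulVec_eq_zero_iff.mp ⟨1, hone, hB1⟩
  obtain ⟨c, hc0, hcB⟩ := Matrix.exists_vecMul_eq_zero_iff.mpr hdetB
  set c' : Fin n → ℝ := fun i => if h : u i = 0 then c ⟨i, h⟩ else 0 with hc'
  have hvc : Matrix.vecMul c' T = 0 := by
    funext j
    have hre : Matrix.vecMul c' T j = ∑ i, c' i * T i j := by
      simp [Matrix.vecMul, dotProduct]
    rw [hre]
    have hsplit := Finset.sum_filter_add_sum_filter_not Finset.univ (fun i => u i = 0)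
      (fun i => c' i * T i j)
    have hnot : ∑ i ∈ Finset.univ.filter (fun i => ¬ u i = 0), c' i * T i j = 0 := by
      apply Finset.sum_eq_zero
      intro i hi
      simp only [Finset.mem_filter] at hi
      simp [hc', dif_neg hi.2]
    have hfil : ∑ i ∈ Finset.univ.filter (fun i => u i = 0), c' i * T i j
        = ∑ i : {i : Fin n // u i = 0}, c i * T i.1 j := by
      rw [Finset.sum_subtype (p := fun i => u i = 0) _ (by simp) (fun i => c' i * T i j)]
      apply Finset.sum_congr rfl
      intro i _
      have hci : c' i.1 = c i := by
        simp only [hc']; rw [dif_pos i.2]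
      rw [hci]
    rw [← hsplit, hnot, add_zero, hfil]
    by_cases hj : u j = 0
    · have := congrFun hcB ⟨j, hj⟩
      simp only [Matrix.vecMul, dotProduct, Pi.zero_apply, hB, Matrix.of_apply] at this
      exact this
    · apply Finset.sum_eq_zero
      intro i _
      rw [(claim i.1 i.2).1 j hj, mul_zero]
  have hc'ne : c' ≠ 0 := by
    obtain ⟨i1, h1⟩ := Function.ne_iff.mp hc0
    apply Function.ne_iff.mpr
    refine ⟨i1.1, ?_⟩
    simpa [hc', dif_pos i1.2] using h1
  exact hdetT (Matrix.exists_vecMul_eq_zero_iff.mp ⟨c', hc'ne, hvc⟩)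
theorem stmt8 (n : ℕ) (σ lam d q : ℝ) (hσ : 0 < σ) (hlam : 0 < lam) (hq : 0 ≤ q)
    (T : Matrix (Fin n) (Fin n) ℝ)
    (hoff : ∀ i j, i ≠ j → 0 ≤ T i j) (hrow : ∀ i, ∑ j, T i j ≤ 0)
    (heig : ∀ μ ∈ spectrum ℂ (T.map (Complex.ofReal : ℝ → ℂ)), μ.re < 0)
    (α : Fin n → ℝ) (hα0 : ∀ i, 0 ≤ α i) (hα1 : ∑ i, α i = 1)
    (t : Fin n → ℝ) (ht : t = (-T).mulVec 1)
    (f : ℝ → ℝ)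
    (hf : ∀ x : ℝ, f x =
      (d + Real.sqrt (d ^ 2 + σ ^ 2 * (2 * lam + 2 * q -
        2 * lam * (Matrix.vecMul α
          ((x - 2 * d / σ ^ 2) • (1 : Matrix (Fin n) (Fin n) ℝ) - T)⁻¹ ⬝ᵥ t)))) / σ ^ 2)
    (a : ℕ → ℝ) (ha0 : a 0 > 2 * d / σ ^ 2)
    (hrec : ∀ m : ℕ, a (m + 1) = f (a m))
    (hmono : Monotone a ∨ Antitone a) :
    (∀ m : ℕ, 1 ≤ m → max (2 * d / σ ^ 2) 0 < a m ∧
      a m < (d + Real.sqrt (d ^ 2 + 2 * σ ^ 2 * (lam + q))) / σ ^ 2) ∧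
    ∃ L : ℝ, Tendsto a atTop (𝓝 L) ∧ f L = L := by
  classical
  have hσ2 : (0:ℝ) < σ ^ 2 := by positivity
  -- determinant of T is nonzero
  have hdetT : T.det ≠ 0 := by
    intro h
    have h0 : (0:ℂ) ∈ spectrum ℂ (T.map (Complex.ofReal : ℝ → ℂ)) := by
      rw [spectrum.mem_iff]
      intro hunit
      rw [map_zero, zero_sub] at hunit
      have hdet := (Matrix.isUnit_iff_isUnit_det _).mp hunit
      have hdmap : (T.map (Complex.ofReal : ℝ → ℂ)).det = 0 := by
        have h2 := (RingHom.map_det Complex.ofRealHom T).symm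
        rw [h, map_zero] at h2
        exact h2
      rw [Matrix.det_neg, hdmap, mul_zero] at hdet
      exact (not_isUnit_zero : ¬ IsUnit (0:ℂ)) hdet
    have := heig 0 h0
    simp at this
  -- some alpha weight is positive
  have hexα : ∃ i, 0 < α i := by
    by_contra h
    push_neg at h
    have : ∑ i, α i ≤ 0 := Finset.sum_nonpos fun i _ => h i
    rw [hα1] at this
    linarith
  have ht0 : ∀ i, 0 ≤ t i := by
    intro i
    have : t i = -∑ j, T i j := by
      rw [ht]; simp [Matrix.mulVec, dotProduct]
    rw [this]
    linarith [hrow i]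
  set g : ℝ → ℝ := fun x => Matrix.vecMul α
      ((x - 2 * d / σ ^ 2) • (1 : Matrix (Fin n) (Fin n) ℝ) - T)⁻¹ ⬝ᵥ t with hg
  -- bounds on g
  have hgbound : ∀ x, 2 * d / σ ^ 2 < x → 0 < g x ∧ g x < 1 := by
    intro x hx
    set s : ℝ := x - 2 * d / σ ^ 2 with hsdef
    have hs0 : 0 < s := sub_pos.mpr hx
    set M : Matrix (Fin n) (Fin n) ℝ := s • (1 : Matrix (Fin n) (Fin n) ℝ) - T with hM
    have hdet : M.det ≠ 0 := aux_det T hoff hrow hs0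
    have hMinv : M * M⁻¹ = 1 := Matrix.mul_nonsing_inv _ (Ne.isUnit hdet)
    set u : Fin n → ℝ := M⁻¹.mulVec t with hu
    have hMu : M.mulVec u = t := by
      rw [hu, Matrix.mulVec_mulVec, hMinv, Matrix.one_mulVec]
    have hu0 : ∀ i, 0 ≤ u i := aux_nonneg T hoff hrow hs0 hMu ht0
    have hupos : ∀ i, 0 < u i := by
      refine aux_upos T hoff hrow hdetT hs0 hu0 ?_
      rw [hMu, ht]
    set w : Fin n → ℝ := M⁻¹.mulVec 1 with hw
    have hMw : M.mulVec w = 1 := by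
      rw [hw, Matrix.mulVec_mulVec, hMinv, Matrix.one_mulVec]
    have hwpos : ∀ i, 0 < w i := aux_pos T hoff hrow hs0 hMw (fun i => by norm_num)
    -- u = 1 - s • w
    have hkey : u = (fun _ => 1) - s • w := by
      have h1 : M.mulVec ((fun _ => (1:ℝ)) - s • w) = t := by
        rw [Matrix.mulVec_sub, Matrix.mulVec_smul, hMw]
        funext i
        have h2 : (M.mulVec (fun _ => (1:ℝ))) i = s - ∑ j, T i j := by
          have := aux_entry T s (fun _ => (1:ℝ)) i
          rw [hM]
          simpa using this
        have h3 : t i = -∑ j, T i j := by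
          rw [ht]; simp [Matrix.mulVec, dotProduct]
        simp only [Pi.sub_apply, Pi.smul_apply, Pi.one_apply, smul_eq_mul, h2, h3]
        ring
      have h4 : M.mulVec (u - ((fun _ => 1) - s • w)) = 0 := by
        rw [Matrix.mulVec_sub, hMu, h1, sub_self]
      have h5 := aux_inj T hoff hrow hs0 h4
      have := sub_eq_zero.mp h5
      exact this
    have hui : ∀ i, u i = 1 - s * w i := by
      intro i
      have := congrFun hkey i
      simpa using this
    have hgu : g x = ∑ i, α i * u i := by
      rw [hg]
      simp only []
      rw [← dotProduct_mulVec]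
      rfl
    obtain ⟨i1, hi1⟩ := hexα
    constructor
    · rw [hgu]
      apply Finset.sum_pos'
      · intro i _
        exact mul_nonneg (hα0 i) (hu0 i)
      · exact ⟨i1, Finset.mem_univ i1, mul_pos hi1 (hupos i1)⟩
    · rw [hgu]
      have hrw : ∑ i, α i * u i = 1 - s * ∑ i, α i * w i := by
        have : ∀ i, α i * u i = α i - s * (α i * w i) := by
          intro i; rw [hui i]; ring
        rw [Finset.sum_congr rfl (fun i _ => this i), Finset.sum_sub_distrib, hα1,
          ← Finset.mul_sum]
      rw [hrw]
      have hpos : 0 < ∑ i, α i * w i := by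
        apply Finset.sum_pos'
        · intro i _
          exact mul_nonneg (hα0 i) (hwpos i).le
        · exact ⟨i1, Finset.mem_univ i1, mul_pos hi1 (hwpos i1)⟩
      nlinarith
  -- bounds on f
  have habsmax : max (2 * d / σ ^ 2) 0 = (d + |d|) / σ ^ 2 := by
    rcases le_total d 0 with hd | hd
    · rw [abs_of_nonpos hd, max_eq_right, add_neg_cancel, zero_div]
      apply div_nonpos_of_nonpos_of_nonneg <;> [linarith; positivity]
    · rw [abs_of_nonneg hd, max_eq_left]
      · ring_nf
      · apply div_nonneg <;> [linarith; positivity]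
  have hfb : ∀ x, 2 * d / σ ^ 2 < x →
      max (2 * d / σ ^ 2) 0 < f x ∧
      f x < (d + Real.sqrt (d ^ 2 + 2 * σ ^ 2 * (lam + q))) / σ ^ 2 := by
    intro x hx
    obtain ⟨hg0, hg1⟩ := hgbound x hx
    rw [hf x]
    set G := g x with hGdef
    have hc1 : 0 < 2 * lam + 2 * q - 2 * lam * G := by nlinarith
    have hc2 : 2 * lam + 2 * q - 2 * lam * G < 2 * (lam + q) := by nlinarith
    have hsq : |d| < Real.sqrt (d ^ 2 + σ ^ 2 * (2 * lam + 2 * q - 2 * lam * G)) := by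
      rw [← Real.sqrt_sq_eq_abs]
      apply Real.sqrt_lt_sqrt (sq_nonneg d)
      nlinarith
    have hsq2 : Real.sqrt (d ^ 2 + σ ^ 2 * (2 * lam + 2 * q - 2 * lam * G))
        < Real.sqrt (d ^ 2 + 2 * σ ^ 2 * (lam + q)) := by
      apply Real.sqrt_lt_sqrt (by nlinarith)
      nlinarith
    constructor
    · rw [habsmax]
      apply (div_lt_div_iff_of_pos_right hσ2).mpr
      linarith
    · apply (div_lt_div_iff_of_pos_right hσ2).mpr
      linarith
  -- all iterates stay above 2d/σ²
  have hAm : ∀ m, 2 * d / σ ^ 2 < a m := by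
    intro m
    induction m with
    | zero => exact ha0
    | succ k ih =>
      rw [hrec k]
      exact lt_of_le_of_lt (le_max_left _ _) (hfb (a k) ih).1
  have hpart1 : ∀ m : ℕ, 1 ≤ m → max (2 * d / σ ^ 2) 0 < a m ∧
      a m < (d + Real.sqrt (d ^ 2 + 2 * σ ^ 2 * (lam + q))) / σ ^ 2 := by
    intro m hm
    match m, hm with
    | (k+1), _ =>
      rw [hrec k]
      exact hfb (a k) (hAm k)
  refine ⟨hpart1, ?_⟩
  -- boundedness
  set U : ℝ := (d + Real.sqrt (d ^ 2 + 2 * σ ^ 2 * (lam + q))) / σ ^ 2 with hU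
  have hub : ∀ m, a m ≤ max (a 0) U := by
    intro m
    cases m with
    | zero => exact le_max_left _ _
    | succ k => exact le_trans (hpart1 (k+1) (by omega)).2.le (le_max_right _ _)
  have hlb : ∀ m, min (a 0) (max (2 * d / σ ^ 2) 0) ≤ a m := by
    intro m
    cases m with
    | zero => exact min_le_left _ _
    | succ k => exact le_trans (min_le_right _ _) (hpart1 (k+1) (by omega)).1.le
  -- convergence to some limit
  obtain ⟨L, hL⟩ : ∃ L, Tendsto a atTop (𝓝 L) := by
    rcases hmono with hmon | hant
    · exact ⟨_, tendsto_atTop_ciSup hmon ⟨max (a 0) U, by rintro y ⟨m, rfl⟩; exact hub m⟩⟩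
    · exact ⟨_, tendsto_atTop_ciInf hant
        ⟨min (a 0) (max (2 * d / σ ^ 2) 0), by rintro y ⟨m, rfl⟩; exact hlb m⟩⟩
  refine ⟨L, hL, ?_⟩
  -- continuity of f at L
  have hLge : 2 * d / σ ^ 2 ≤ L :=
    ge_of_tendsto hL (Filter.Eventually.of_forall fun m => (hAm m).le)
  have hdetL : ((L - 2 * d / σ ^ 2) • (1 : Matrix (Fin n) (Fin n) ℝ) - T).det ≠ 0 := by
    rcases lt_or_eq_of_le hLge with h | h
    · exact aux_det T hoff hrow (sub_pos.mpr h)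
    · rw [← h, sub_self, zero_smul, zero_sub, Matrix.det_neg]
      intro hcon
      rcases mul_eq_zero.mp hcon with h1 | h1
      · exact pow_ne_zero _ (by norm_num : (-1:ℝ) ≠ 0) h1
      · exact hdetT h1
  have hAc : Continuous (fun x : ℝ =>
      (x - 2 * d / σ ^ 2) • (1 : Matrix (Fin n) (Fin n) ℝ) - T) :=
    (((continuous_id.sub continuous_const).smul continuous_const).sub continuous_const)
  have hIc : ContinuousAt (fun x : ℝ =>
      ((x - 2 * d / σ ^ 2) • (1 : Matrix (Fin n) (Fin n) ℝ) - T)⁻¹) L := by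
    apply ContinuousAt.comp (g := Inv.inv)
    · apply continuousAt_matrix_inv
      rw [Ring.inverse_eq_inv']
      exact continuousAt_inv₀ hdetL
    · exact hAc.continuousAt
  have hφ : Continuous (fun B : Matrix (Fin n) (Fin n) ℝ => Matrix.vecMul α B ⬝ᵥ t) :=
    (continuous_const.matrix_vecMul continuous_id).dotProduct continuous_const
  have hgc : ContinuousAt g L := hφ.continuousAt.comp hIc
  have hcf : ContinuousAt f L := by
    have hfeq : f = fun x => (d + Real.sqrt (d ^ 2 + σ ^ 2 *
        (2 * lam + 2 * q - 2 * lam * g x))) / σ ^ 2 := funext fun x => hf x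
    rw [hfeq]
    apply ContinuousAt.div_const
    apply ContinuousAt.add continuousAt_const
    apply ContinuousAt.comp Real.continuous_sqrt.continuousAt
    exact continuousAt_const.add (continuousAt_const.mul
      (continuousAt_const.sub (continuousAt_const.mul hgc)))
  -- f L = L
  have h4 : Tendsto (fun m => a (m + 1)) atTop (𝓝 L) :=
    hL.comp (tendsto_add_atTop_nat 1)
  have h5 : Tendsto (fun m => f (a m)) atTop (𝓝 (f L)) := hcf.tendsto.comp hL
  have h6 : (fun m => f (a m)) = fun m => a (m + 1) := funext fun m => (hrec m).symm
  rw [h6] at h5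
  exact tendsto_nhds_unique h5 h4
end

section
/- Let a be a fixed point of f(a) = (d + √(d² + σ²(2λ + 2q − 2λ α((a − 2d/σ²)I − T)^{-1} t)))/σ² with a > 2d/σ², and let b = (2λ/σ²) α((a − 2d/σ²)I − T)^{-1}. Then f'(a) = b((a − 2d/σ²)I − T)^{-1} t / (2a − 2d/σ²). Moreover, if b·1 ≤ a and b·1 > 0, then 0 < f'(a) < 1. -/
open Matrix

-- Lemma A: inverse positivity
lemma keyA {n : ℕ} (T : Matrix (Fin n) (Fin n) ℝ)
    (hoff : ∀ i j, i ≠ j → 0 ≤ T i j) (hrow : ∀ i, ∑ j, T i j ≤ 0)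
    {s : ℝ} (hs : 0 < s) {v : Fin n → ℝ}
    (hv : ∀ i, 0 ≤ ((s • (1:Matrix (Fin n) (Fin n) ℝ) - T).mulVec v) i) :
    ∀ i, 0 ≤ v i := by
  by_contra hc
  push_neg at hc
  obtain ⟨i₀, hi₀⟩ := hc
  obtain ⟨m, -, hm⟩ := Finset.exists_min_image Finset.univ v ⟨i₀, Finset.mem_univ i₀⟩
  have hmneg : v m < 0 := lt_of_le_of_lt (hm i₀ (Finset.mem_univ _)) hi₀
  have hexp : ((s • (1:Matrix (Fin n) (Fin n) ℝ) - T).mulVec v) m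
      = s * v m - ∑ j, T m j * v j := by
    simp [Matrix.mulVec, dotProduct, Matrix.sub_apply, Matrix.smul_apply,
      Matrix.one_apply, sub_mul, Finset.sum_sub_distrib, ite_mul,
      Finset.sum_ite_eq, mul_assoc]
  have hbound : (∑ j, T m j) * v m ≤ ∑ j, T m j * v j := by
    rw [Finset.sum_mul]
    refine Finset.sum_le_sum fun j _ => ?_
    rcases eq_or_ne m j with rfl | h
    · exact le_refl _
    · exact mul_le_mul_of_nonneg_left (hm j (Finset.mem_univ _)) (hoff m j h)
  have h0 := hv m
  rw [hexp] at h0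
  have hpos : (0:ℝ) < s - ∑ j, T m j := by linarith [hrow m]
  nlinarith [mul_neg_of_pos_of_neg hpos hmneg]

lemma keyUnit {n : ℕ} (T : Matrix (Fin n) (Fin n) ℝ)
    (hoff : ∀ i j, i ≠ j → 0 ≤ T i j) (hrow : ∀ i, ∑ j, T i j ≤ 0)
    {s : ℝ} (hs : 0 < s) :
    IsUnit (s • (1:Matrix (Fin n) (Fin n) ℝ) - T) := by
  rw [Matrix.isUnit_iff_isUnit_det, isUnit_iff_ne_zero]
  intro hdet
  obtain ⟨v, hv0, hv⟩ := (Matrix.exists_mulVec_eq_zero_iff).mpr hdet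
  apply hv0
  funext i
  have h1 : 0 ≤ v i := keyA T hoff hrow hs (fun j => by rw [hv]; exact le_refl 0) i
  have h2 : 0 ≤ (-v) i := by
    refine keyA T hoff hrow hs (fun j => ?_) i
    rw [Matrix.mulVec_neg, hv]
    simp
  simp only [Pi.neg_apply, Pi.zero_apply] at h1 h2 ⊢
  linarith

lemma keyInvNonneg {n : ℕ} (T : Matrix (Fin n) (Fin n) ℝ)
    (hoff : ∀ i j, i ≠ j → 0 ≤ T i j) (hrow : ∀ i, ∑ j, T i j ≤ 0)
    {s : ℝ} (hs : 0 < s) :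
    ∀ i j, 0 ≤ (s • (1:Matrix (Fin n) (Fin n) ℝ) - T)⁻¹ i j := by
  intro i j
  set M := s • (1:Matrix (Fin n) (Fin n) ℝ) - T with hM
  have hu : IsUnit M := keyUnit T hoff hrow hs
  have hmul : M * M⁻¹ = 1 := Matrix.mul_nonsing_inv M ((Matrix.isUnit_iff_isUnit_det M).mp hu)
  have := keyA T hoff hrow hs (v := M⁻¹.mulVec (Pi.single j 1)) (fun k => by
    rw [← hM, Matrix.mulVec_mulVec, hmul, Matrix.one_mulVec]
    by_cases h : k = j <;> simp [Pi.single_apply, h]) i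
  simpa [Matrix.mulVec_single] using this

section Vbounds
variable {n : ℕ} (T : Matrix (Fin n) (Fin n) ℝ)

lemma keyRowSum {s : ℝ} :
    ∀ i, ((s • (1:Matrix (Fin n) (Fin n) ℝ) - T).mulVec (fun _ => (1:ℝ))) i
      = s - ∑ j, T i j := by
  intro i
  simp [Matrix.mulVec, dotProduct, Matrix.sub_apply, Matrix.smul_apply,
    Matrix.one_apply, sub_mul, Finset.sum_sub_distrib, Finset.sum_ite_eq]

lemma keyT1 : ∀ i, ((-T).mulVec (1 : Fin n → ℝ)) i = -∑ j, T i j := by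
  intro i
  simp [Matrix.mulVec, dotProduct, Matrix.neg_apply]

lemma keyMV (hoff : ∀ i j, i ≠ j → 0 ≤ T i j) (hrow : ∀ i, ∑ j, T i j ≤ 0)
    {s : ℝ} (hs : 0 < s) :
    (s • (1:Matrix (Fin n) (Fin n) ℝ) - T).mulVec
      ((s • (1:Matrix (Fin n) (Fin n) ℝ) - T)⁻¹.mulVec ((-T).mulVec 1))
    = (-T).mulVec 1 := by
  have hu := keyUnit T hoff hrow hs
  rw [Matrix.mulVec_mulVec,
    Matrix.mul_nonsing_inv _ ((Matrix.isUnit_iff_isUnit_det _).mp hu), Matrix.one_mulVec]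

lemma keyVnonneg (hoff : ∀ i j, i ≠ j → 0 ≤ T i j) (hrow : ∀ i, ∑ j, T i j ≤ 0)
    {s : ℝ} (hs : 0 < s) :
    ∀ i, 0 ≤ ((s • (1:Matrix (Fin n) (Fin n) ℝ) - T)⁻¹.mulVec ((-T).mulVec 1)) i := by
  refine keyA T hoff hrow hs (fun i => ?_)
  rw [keyMV T hoff hrow hs, keyT1 T i]
  simpa [neg_nonneg] using hrow i

lemma keyVle1 (hoff : ∀ i j, i ≠ j → 0 ≤ T i j) (hrow : ∀ i, ∑ j, T i j ≤ 0)
    {s : ℝ} (hs : 0 < s) :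
    ∀ i, ((s • (1:Matrix (Fin n) (Fin n) ℝ) - T)⁻¹.mulVec ((-T).mulVec 1)) i ≤ 1 := by
  set M := s • (1:Matrix (Fin n) (Fin n) ℝ) - T with hM
  set v : Fin n → ℝ := M⁻¹.mulVec ((-T).mulVec 1) with hv
  have h0 : ∀ i, 0 ≤ (M.mulVec ((fun _ => (1:ℝ)) - v)) i := by
    intro i
    rw [Matrix.mulVec_sub]
    simp only [Pi.sub_apply]
    rw [keyRowSum T i, hv, keyMV T hoff hrow hs, keyT1 T i]
    linarith
  intro i
  have := keyA T hoff hrow hs h0 i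
  simp only [Pi.sub_apply] at this
  linarith

end Vbounds

lemma keyVpos {n : ℕ} (T : Matrix (Fin n) (Fin n) ℝ)
    (hoff : ∀ i j, i ≠ j → 0 ≤ T i j) (hrow : ∀ i, ∑ j, T i j ≤ 0)
    (heig : ∀ μ ∈ spectrum ℂ (T.map (Complex.ofReal : ℝ → ℂ)), μ.re < 0)
    {s : ℝ} (hs : 0 < s) :
    ∀ i, 0 < ((s • (1:Matrix (Fin n) (Fin n) ℝ) - T)⁻¹.mulVec ((-T).mulVec 1)) i := by
  classical
  set M := s • (1:Matrix (Fin n) (Fin n) ℝ) - T with hM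
  set v : Fin n → ℝ := M⁻¹.mulVec ((-T).mulVec 1) with hv
  have hvnn : ∀ i, 0 ≤ v i := keyVnonneg T hoff hrow hs
  by_contra hc
  push_neg at hc
  obtain ⟨i₀, hi₀⟩ := hc
  have hvi₀ : v i₀ = 0 := le_antisymm hi₀ (hvnn i₀)
  set S : Finset (Fin n) := Finset.univ.filter (fun i => v i = 0) with hS
  have hi₀S : i₀ ∈ S := by simp [hS, hvi₀]
  -- for i in S : T i j = 0 for j ∉ S, and ∑_{j ∈ S} T i j = 0
  have hMv := keyMV T hoff hrow hs
  rw [← hM, ← hv] at hMv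
  have main : ∀ i ∈ S, (∀ j ∉ S, T i j = 0) ∧ ∑ j ∈ S, T i j = 0 := by
    intro i hiS
    have hvi : v i = 0 := by simpa [hS] using hiS
    have hMvi : (M.mulVec v) i = -∑ j, T i j := by rw [hMv, keyT1 T i]
    have hexp : (M.mulVec v) i = s * v i - ∑ j, T i j * v j := by
      simp [hM, Matrix.mulVec, dotProduct, Matrix.sub_apply, Matrix.smul_apply,
        Matrix.one_apply, sub_mul, Finset.sum_sub_distrib, ite_mul,
        Finset.sum_ite_eq, mul_assoc]
    have hsum : ∑ j, T i j * v j = ∑ j, T i j := by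
      rw [hexp, hvi] at hMvi
      linarith
    -- ∑ j, T i j * (v j) with v j = 0 on S ; so ∑_{j ∉ S} T i j * v j = ∑ j, T i j ≤ 0
    have hsplit : ∑ j, T i j * v j = ∑ j ∈ Sᶜ, T i j * v j := by
      rw [← Finset.sum_compl_add_sum S (fun j => T i j * v j)]
      have : ∑ j ∈ S, T i j * v j = 0 :=
        Finset.sum_eq_zero fun j hj => by
          have : v j = 0 := by simpa [hS] using hj
          simp [this]
      rw [this, add_zero]
    have hterm : ∀ j ∈ Sᶜ, 0 ≤ T i j * v j := by
      intro j hj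
      have hjS : j ∉ S := Finset.mem_compl.mp hj
      have hij : i ≠ j := fun h => hjS (h ▸ hiS)
      exact mul_nonneg (hoff i j hij) (hvnn j)
    have hle : ∑ j ∈ Sᶜ, T i j * v j ≤ 0 := by
      rw [← hsplit, hsum]; exact hrow i
    have hall0 : ∀ j ∈ Sᶜ, T i j * v j = 0 := by
      intro j hj
      have h1 := Finset.sum_nonneg hterm
      have h2 : ∑ j ∈ Sᶜ, T i j * v j = 0 := le_antisymm hle h1
      exact (Finset.sum_eq_zero_iff_of_nonneg hterm).mp h2 j hj
    constructor
    · intro j hjS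
      have hj : j ∈ Sᶜ := Finset.mem_compl.mpr hjS
      have hvj : 0 < v j := by
        rcases lt_or_eq_of_le (hvnn j) with h | h
        · exact h
        · exact absurd (by simp [hS, h.symm]) hjS
      have := hall0 j hj
      rcases mul_eq_zero.mp this with h | h
      · exact h
      · exact absurd h (ne_of_gt hvj)
    · have hzero : ∑ j ∈ Sᶜ, T i j * v j = 0 := Finset.sum_eq_zero hall0
      have : ∑ j, T i j = 0 := by rw [← hsum, hsplit, hzero]
      rw [← Finset.sum_compl_add_sum S (fun j => T i j)] at this
      have hcompl0 : ∑ j ∈ Sᶜ, T i j = 0 := by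
        refine Finset.sum_eq_zero fun j hj => ?_
        have hjS : j ∉ S := Finset.mem_compl.mp hj
        have hvj : 0 < v j := by
          rcases lt_or_eq_of_le (hvnn j) with h | h
          · exact h
          · exact absurd (by simp [hS, h.symm]) hjS
        have := hall0 j hj
        rcases mul_eq_zero.mp this with h | h
        · exact h
        · exact absurd h (ne_of_gt hvj)
      linarith
  -- build a left null vector of T
  have hne : Nonempty {x // x ∈ S} := ⟨⟨i₀, hi₀S⟩⟩
  set B : Matrix {x // x ∈ S} {x // x ∈ S} ℝ :=
    T.submatrix (Subtype.val) (Subtype.val) with hB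
  have hB1 : B.mulVec (fun _ => (1:ℝ)) = 0 := by
    funext i
    have := (main i.val i.property).2
    simp only [hB, Matrix.mulVec, dotProduct, Matrix.submatrix_apply, mul_one,
      Pi.zero_apply]
    rw [← this]
    exact Finset.sum_coe_sort S (fun j => T i.val j)
  have hdetB : B.det = 0 := by
    rw [← Matrix.exists_mulVec_eq_zero_iff]
    exact ⟨(fun _ => 1), by intro h; simpa using congrFun h (Classical.arbitrary _), hB1⟩
  obtain ⟨y, hy0, hyB⟩ := Matrix.exists_vecMul_eq_zero_iff.mpr hdetB
  set x : Fin n → ℝ := fun j => if h : j ∈ S then y ⟨j, h⟩ else 0 with hx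
  have hx0 : x ≠ 0 := by
    intro h
    apply hy0
    funext k
    have := congrFun h k.val
    simpa [hx, k.property] using this
  have hxT : Matrix.vecMul x T = 0 := by
    funext j
    have hsum : Matrix.vecMul x T j = ∑ i ∈ S, x i * T i j := by
      rw [Matrix.vecMul, dotProduct]
      rw [← Finset.sum_compl_add_sum S (fun i => x i * T i j)]
      have : ∑ i ∈ Sᶜ, x i * T i j = 0 :=
        Finset.sum_eq_zero fun i hi => by
          have : i ∉ S := Finset.mem_compl.mp hi
          simp [hx, this]
      rw [this, zero_add]
    by_cases hjS : j ∈ S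
    · have := congrFun hyB (⟨j, hjS⟩ : {x // x ∈ S})
      simp only [Matrix.vecMul, dotProduct, hB, Matrix.submatrix_apply,
        Pi.zero_apply] at this
      rw [hsum, Pi.zero_apply, ← this, ← Finset.sum_coe_sort S (fun i => x i * T i j)]
      refine Finset.sum_congr rfl fun i _ => ?_
      simp [hx, i.property]
    · rw [hsum, Pi.zero_apply]
      exact Finset.sum_eq_zero fun i hiS => by rw [(main i hiS).1 j hjS, mul_zero]
  have hdetT : T.det = 0 := by
    rw [← Matrix.exists_vecMul_eq_zero_iff]
    exact ⟨x, hx0, hxT⟩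
  -- contradiction with heig
  have h0spec : (0:ℂ) ∈ spectrum ℂ (T.map (Complex.ofReal : ℝ → ℂ)) := by
    rw [spectrum.mem_iff]
    intro hunit
    rw [map_zero, zero_sub, IsUnit.neg_iff, Matrix.isUnit_iff_isUnit_det] at hunit
    have : (T.map (Complex.ofReal : ℝ → ℂ)).det = 0 := by
      have h := RingHom.map_det Complex.ofRealHom T
      rw [hdetT, map_zero] at h
      rw [← h.symm]
      simp [RingHom.mapMatrix_apply]
      rfl
    rw [this] at hunit
    exact (isUnit_iff_ne_zero.mp hunit) rfl
  have := heig 0 h0spec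
  simp at this

attribute [local instance] Matrix.linftyOpNormedAddCommGroup Matrix.linftyOpNormedRing
  Matrix.linftyOpNormedAlgebra

lemma keyDerivInv {n : ℕ} (T : Matrix (Fin n) (Fin n) ℝ) {c a : ℝ}
    (h : IsUnit ((a - c) • (1:Matrix (Fin n) (Fin n) ℝ) - T)) :
    HasDerivAt (fun x : ℝ => Ring.inverse ((x - c) • (1:Matrix (Fin n) (Fin n) ℝ) - T))
      (-(((a - c) • (1:Matrix (Fin n) (Fin n) ℝ) - T)⁻¹ *
         ((a - c) • (1:Matrix (Fin n) (Fin n) ℝ) - T)⁻¹)) a := by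
  have : CompleteSpace (Matrix (Fin n) (Fin n) ℝ) := FiniteDimensional.complete ℝ _
  have hM : HasDerivAt (fun x : ℝ => (x - c) • (1:Matrix (Fin n) (Fin n) ℝ) - T)
      ((1:ℝ) • (1:Matrix (Fin n) (Fin n) ℝ)) a :=
    (((hasDerivAt_id a).sub_const c).smul_const (1:Matrix (Fin n) (Fin n) ℝ)).sub_const T
  have hinv : (↑h.unit⁻¹ : Matrix (Fin n) (Fin n) ℝ)
      = ((a - c) • (1:Matrix (Fin n) (Fin n) ℝ) - T)⁻¹ := by
    have h2 := Ring.inverse_unit h.unit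
    rw [h.unit_spec] at h2
    rw [Matrix.nonsing_inv_eq_ringInverse, h2]
  have hF := hasFDerivAt_ringInverse (𝕜 := ℝ) h.unit
  rw [h.unit_spec] at hF
  have := hF.comp_hasDerivAt a hM
  simp only [hinv, one_smul] at this
  exact this.congr_deriv (by rw [ContinuousLinearMap.neg_apply, ContinuousLinearMap.mulLeftRight_apply, mul_one])

lemma keyDerivPhi {n : ℕ} (T : Matrix (Fin n) (Fin n) ℝ) {c a : ℝ}
    (h : IsUnit ((a - c) • (1:Matrix (Fin n) (Fin n) ℝ) - T)) (α t : Fin n → ℝ) :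
    HasDerivAt (fun x : ℝ =>
        α ⬝ᵥ ((Ring.inverse ((x - c) • (1:Matrix (Fin n) (Fin n) ℝ) - T)).mulVec t))
      (-(α ⬝ᵥ ((((a - c) • (1:Matrix (Fin n) (Fin n) ℝ) - T)⁻¹ *
          ((a - c) • (1:Matrix (Fin n) (Fin n) ℝ) - T)⁻¹).mulVec t))) a := by
  have : CompleteSpace (Matrix (Fin n) (Fin n) ℝ) := FiniteDimensional.complete ℝ _
  let L : Matrix (Fin n) (Fin n) ℝ →ₗ[ℝ] ℝ :=
  { toFun := fun A => α ⬝ᵥ (A.mulVec t)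
    map_add' := fun A B => by
      rw [Matrix.add_mulVec, dotProduct_add]
    map_smul' := fun r A => by
      rw [Matrix.smul_mulVec, dotProduct_smul]
      simp }
  have hL := (LinearMap.toContinuousLinearMap L).hasFDerivAt
    (x := Ring.inverse ((a - c) • (1:Matrix (Fin n) (Fin n) ℝ) - T))
  have hcomp := hL.comp_hasDerivAt a (keyDerivInv T h)
  have : (LinearMap.toContinuousLinearMap L)
      (-(((a - c) • (1:Matrix (Fin n) (Fin n) ℝ) - T)⁻¹ *
         ((a - c) • (1:Matrix (Fin n) (Fin n) ℝ) - T)⁻¹))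
      = -(α ⬝ᵥ ((((a - c) • (1:Matrix (Fin n) (Fin n) ℝ) - T)⁻¹ *
          ((a - c) • (1:Matrix (Fin n) (Fin n) ℝ) - T)⁻¹).mulVec t)) := by
    show α ⬝ᵥ _ = _
    rw [Matrix.neg_mulVec, dotProduct_neg]
  exact hcomp.congr_deriv this

theorem stmt9 (n : ℕ) (σ lam d q : ℝ) (hσ : 0 < σ) (hlam : 0 < lam) (hq : 0 ≤ q)
    (T : Matrix (Fin n) (Fin n) ℝ)
    (hoff : ∀ i j, i ≠ j → 0 ≤ T i j) (hrow : ∀ i, ∑ j, T i j ≤ 0)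
    (heig : ∀ μ ∈ spectrum ℂ (T.map (Complex.ofReal : ℝ → ℂ)), μ.re < 0)
    (α : Fin n → ℝ) (hα0 : ∀ i, 0 ≤ α i) (hα1 : ∑ i, α i = 1)
    (t : Fin n → ℝ) (ht : t = (-T).mulVec 1)
    (f : ℝ → ℝ)
    (hf : ∀ x : ℝ, f x =
      (d + Real.sqrt (d ^ 2 + σ ^ 2 * (2 * lam + 2 * q -
        2 * lam * (Matrix.vecMul α
          ((x - 2 * d / σ ^ 2) • (1 : Matrix (Fin n) (Fin n) ℝ) - T)⁻¹ ⬝ᵥ t)))) / σ ^ 2)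
    (a : ℝ) (ha : 2 * d / σ ^ 2 < a) (hfix : f a = a)
    (b : Fin n → ℝ)
    (hb : b = (2 * lam / σ ^ 2) •
      Matrix.vecMul α ((a - 2 * d / σ ^ 2) • (1 : Matrix (Fin n) (Fin n) ℝ) - T)⁻¹) :
    deriv f a =
      (b ⬝ᵥ (((a - 2 * d / σ ^ 2) • (1 : Matrix (Fin n) (Fin n) ℝ) - T)⁻¹.mulVec t)) /
        (2 * a - 2 * d / σ ^ 2) ∧
    ((∑ i, b i) ≤ a → 0 < ∑ i, b i → 0 < deriv f a ∧ deriv f a < 1) := by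
  have hσ2 : (0:ℝ) < σ ^ 2 := by positivity
  set c : ℝ := 2 * d / σ ^ 2 with hc
  have hs₀ : 0 < a - c := sub_pos.mpr ha
  set M : Matrix (Fin n) (Fin n) ℝ := (a - c) • (1 : Matrix (Fin n) (Fin n) ℝ) - T with hMdef
  have hu : IsUnit M := keyUnit T hoff hrow hs₀
  set N : Matrix (Fin n) (Fin n) ℝ := M⁻¹ with hNdef
  set v : Fin n → ℝ := N.mulVec t with hvdef
  have hvnn : ∀ i, 0 ≤ v i := by rw [hvdef, hNdef, hMdef, ht]; exact keyVnonneg T hoff hrow hs₀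
  have hvle : ∀ i, v i ≤ 1 := by rw [hvdef, hNdef, hMdef, ht]; exact keyVle1 T hoff hrow hs₀
  have hvpos : ∀ i, 0 < v i := by
    rw [hvdef, hNdef, hMdef, ht]; exact keyVpos T hoff hrow heig hs₀
  have hNnn : ∀ i j, 0 ≤ N i j := by rw [hNdef, hMdef]; exact keyInvNonneg T hoff hrow hs₀
  -- φ at a
  set φa : ℝ := α ⬝ᵥ v with hφa
  have hφa_le : φa ≤ 1 := by
    rw [hφa, dotProduct, ← hα1]
    exact Finset.sum_le_sum fun i _ =>
      mul_le_of_le_one_right (hα0 i) (hvle i)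
  set ua : ℝ := d ^ 2 + σ ^ 2 * (2 * lam + 2 * q - 2 * lam * φa) with hua
  have hua_nn : 0 ≤ ua := by
    have h2 : 0 ≤ 2 * lam + 2 * q - 2 * lam * φa := by nlinarith
    nlinarith [mul_nonneg hσ2.le h2, sq_nonneg d]
  have hfa : a = (d + Real.sqrt ua) / σ ^ 2 := by
    rw [← hfix, hf a, hua, hφa, hvdef, hNdef, hMdef, Matrix.dotProduct_mulVec]
  have hsqrt : Real.sqrt ua = σ ^ 2 * a - d := by
    rw [eq_div_iff (ne_of_gt hσ2)] at hfa
    linarith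
  have hlin : 0 < σ ^ 2 * a - d := by
    rcases lt_or_ge 0 (σ ^ 2 * a - d) with h | h
    · exact h
    · exfalso
      have h0 : Real.sqrt ua = 0 := le_antisymm (hsqrt ▸ h) (Real.sqrt_nonneg _)
      have hua0 : ua = 0 := by
        have := Real.sq_sqrt hua_nn
        rw [h0] at this; simpa using this.symm
      have h2 : 0 ≤ 2 * lam + 2 * q - 2 * lam * φa := by nlinarith
      have hd0 : d = 0 := by nlinarith [mul_nonneg hσ2.le h2, sq_nonneg d]
      have ha0 : a = 0 := by
        rw [hsqrt, hd0] at h0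
        have := h0
        nlinarith
      rw [hc, hd0, ha0] at ha
      simp at ha
  have hua_pos : 0 < ua := by
    have := Real.sq_sqrt hua_nn
    rw [hsqrt] at this
    nlinarith
  -- derivative
  set X' : ℝ := α ⬝ᵥ ((N * N).mulVec t) with hX'
  have hphiD : HasDerivAt (fun x : ℝ =>
      α ⬝ᵥ ((Ring.inverse ((x - c) • (1:Matrix (Fin n) (Fin n) ℝ) - T)).mulVec t))
      (-X') a := keyDerivPhi T hu α t
  have hInner : HasDerivAt (fun x : ℝ => d ^ 2 + σ ^ 2 * (2 * lam + 2 * q -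
      2 * lam * (α ⬝ᵥ ((Ring.inverse ((x - c) • (1:Matrix (Fin n) (Fin n) ℝ) - T)).mulVec t))))
      (σ ^ 2 * (2 * lam * X')) a := by
    have h1 := ((hphiD.const_mul (2 * lam)).const_sub (2 * lam + 2 * q)).const_mul (σ ^ 2)
    have h2 := h1.const_add (d ^ 2)
    refine h2.congr_deriv ?_
    ring
  have hSqrtD : HasDerivAt (fun x : ℝ => Real.sqrt (d ^ 2 + σ ^ 2 * (2 * lam + 2 * q -
      2 * lam * (α ⬝ᵥ ((Ring.inverse ((x - c) • (1:Matrix (Fin n) (Fin n) ℝ) - T)).mulVec t)))))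
      (σ ^ 2 * (2 * lam * X') / (2 * Real.sqrt ua)) a := by
    have huaeq : ua = d ^ 2 + σ ^ 2 * (2 * lam + 2 * q -
        2 * lam * (α ⬝ᵥ ((Ring.inverse ((a - c) • (1:Matrix (Fin n) (Fin n) ℝ) - T)).mulVec t))) := by
      rw [hua, hφa, hvdef, hNdef, hMdef, Matrix.nonsing_inv_eq_ringInverse]
    have hs := Real.hasDerivAt_sqrt (ne_of_gt hua_pos)
    rw [huaeq] at hs
    have h3 := hs.comp a hInner
    refine h3.congr_deriv ?_
    rw [← huaeq]
    ring
  have hgD : HasDerivAt (fun x : ℝ => (d + Real.sqrt (d ^ 2 + σ ^ 2 * (2 * lam + 2 * q -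
      2 * lam * (α ⬝ᵥ ((Ring.inverse ((x - c) • (1:Matrix (Fin n) (Fin n) ℝ) - T)).mulVec t))))) / σ ^ 2)
      ((σ ^ 2 * (2 * lam * X') / (2 * Real.sqrt ua)) / σ ^ 2) a :=
    (hSqrtD.const_add d).div_const (σ ^ 2)
  have hfg : f =ᶠ[nhds a] (fun x : ℝ => (d + Real.sqrt (d ^ 2 + σ ^ 2 * (2 * lam + 2 * q -
      2 * lam * (α ⬝ᵥ ((Ring.inverse ((x - c) • (1:Matrix (Fin n) (Fin n) ℝ) - T)).mulVec t))))) / σ ^ 2) := by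
    refine Filter.eventuallyEq_of_mem (isOpen_Ioi.mem_nhds ha) fun x hx => ?_
    have hxc : 0 < x - c := sub_pos.mpr hx
    have hux : IsUnit ((x - c) • (1:Matrix (Fin n) (Fin n) ℝ) - T) := keyUnit T hoff hrow hxc
    rw [hf x, ← Matrix.nonsing_inv_eq_ringInverse, ← Matrix.dotProduct_mulVec]
  have hfD : HasDerivAt f ((σ ^ 2 * (2 * lam * X') / (2 * Real.sqrt ua)) / σ ^ 2) a :=
    hgD.congr_of_eventuallyEq hfg
  have hderiv : deriv f a = lam * X' / (σ ^ 2 * a - d) := by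
    rw [hfD.deriv, hsqrt]
    field_simp
  -- relate Y and X'
  have hY : b ⬝ᵥ (N.mulVec t) = (2 * lam / σ ^ 2) * X' := by
    rw [hb, hX', smul_dotProduct, smul_eq_mul]
    congr 1
    rw [Matrix.dotProduct_mulVec, Matrix.dotProduct_mulVec, Matrix.vecMul_vecMul]
  have hDpos : 0 < 2 * a - c := by
    rw [hc] at *
    have : 2 * a - 2 * d / σ ^ 2 = 2 * (σ ^ 2 * a - d) / σ ^ 2 := by field_simp
    rw [this]
    positivity
  have hmain : deriv f a = (b ⬝ᵥ (N.mulVec t)) / (2 * a - c) := by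
    rw [hderiv, hY]
    rw [show (2:ℝ) * a - c = 2 * (σ ^ 2 * a - d) / σ ^ 2 by rw [hc]; field_simp]
    field_simp
  refine ⟨hmain, fun hba hbpos => ?_⟩
  -- part 2
  have hbnn : ∀ j, 0 ≤ b j := by
    intro j
    rw [hb]
    have : ((2 * lam / σ ^ 2) • Matrix.vecMul α N) j
        = (2 * lam / σ ^ 2) * Matrix.vecMul α N j := rfl
    rw [this]
    refine mul_nonneg (by positivity) ?_
    simp only [Matrix.vecMul, dotProduct]
    exact Finset.sum_nonneg fun i _ => mul_nonneg (hα0 i) (hNnn i j)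
  obtain ⟨j₀, hj₀⟩ : ∃ j, 0 < b j := by
    by_contra h
    push_neg at h
    have : ∑ i, b i ≤ 0 := Finset.sum_nonpos fun i _ => h i
    linarith
  have hYpos : 0 < b ⬝ᵥ (N.mulVec t) := by
    rw [dotProduct]
    refine Finset.sum_pos' (fun j _ => mul_nonneg (hbnn j) (hvnn j)) ?_
    exact ⟨j₀, Finset.mem_univ j₀, mul_pos hj₀ (hvpos j₀)⟩
  have hYlt : b ⬝ᵥ (N.mulVec t) < 2 * a - c := by
    have h1 : b ⬝ᵥ (N.mulVec t) ≤ ∑ j, b j := by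
      rw [dotProduct]
      exact Finset.sum_le_sum fun j _ => mul_le_of_le_one_right (hbnn j) (hvle j)
    have h2 : a < 2 * a - c := by linarith
    linarith
  rw [hmain]
  exact ⟨div_pos hYpos hDpos, (div_lt_one hDpos).mpr hYlt⟩
end

section
/- Let d, λ > 0, q > 0 and (α, T) phase-type with t = −T1. If π ≥ 0 solves π((λ + q − d π t)I − dT) = λα with 0 ≤ d π t < λ, then π·1 < 1. -/
open Matrix

theorem stmt11 (n : ℕ) (d lam q : ℝ) (hd : 0 < d) (hlam : 0 < lam) (hq : 0 < q)
    (T : Matrix (Fin n) (Fin n) ℝ)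
    (α : Fin n → ℝ) (hα0 : ∀ i, 0 ≤ α i) (hα1 : ∑ i, α i = 1)
    (t : Fin n → ℝ) (ht : t = (-T).mulVec 1)
    (π : Fin n → ℝ) (hπ0 : ∀ i, 0 ≤ π i)
    (hπt0 : 0 ≤ d * (π ⬝ᵥ t)) (hπt : d * (π ⬝ᵥ t) < lam)
    (heq : Matrix.vecMul π
      ((lam + q - d * (π ⬝ᵥ t)) • (1 : Matrix (Fin n) (Fin n) ℝ) - d • T) = lam • α) :
    ∑ i, π i < 1 := by
  have h := congrArg (· ⬝ᵥ (1 : Fin n → ℝ)) heq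
  rw [← Matrix.dotProduct_mulVec] at h
  rw [Matrix.sub_mulVec, Matrix.smul_mulVec, Matrix.smul_mulVec,
    Matrix.one_mulVec] at h
  have hT1 : T.mulVec 1 = -t := by rw [ht, Matrix.neg_mulVec]; ring_nf
  rw [hT1] at h
  simp only [dotProduct_sub, dotProduct_smul, dotProduct_neg,
    dotProduct_one, Pi.smul_apply, smul_eq_mul, ← Finset.mul_sum, hα1, mul_one] at h
  -- h : (lam + q - d * (π ⬝ᵥ t)) * ∑ i, π i - d * -(π ⬝ᵥ t) = lam
  have hsum0 : 0 ≤ ∑ i, π i := Finset.sum_nonneg fun i _ => hπ0 i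
  nlinarith [h, hπt, hq, hsum0]
end

section
/- Define the iteration π_n = λ α((λ + q − d π_{n-1} t)I − d T)^{-1} for d, λ > 0, q ≥ 0 and phase-type (α, T) with t = −T1. If 0 ≤ π_{n-1} t < λ/d then the inverse exists, π_n > 0 entrywise (assuming irreducibility so that α((sI−T)^{-1}) has positive entries for s > 0), and 0 < π_n t < λ/d. -/
open Matrix

theorem stmt13 (n : ℕ) (d lam q : ℝ) (hd : 0 < d) (hlam : 0 < lam) (hq : 0 ≤ q)
    (T : Matrix (Fin n) (Fin n) ℝ)
    (hoff : ∀ i j, i ≠ j → 0 ≤ T i j) (hrow : ∀ i, ∑ j, T i j ≤ 0)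
    (heig : ∀ μ ∈ spectrum ℂ (T.map (Complex.ofReal : ℝ → ℂ)), μ.re < 0)
    (α : Fin n → ℝ) (hα0 : ∀ i, 0 ≤ α i) (hα1 : ∑ i, α i = 1)
    (t : Fin n → ℝ) (ht : t = (-T).mulVec 1)
    (hirr : ∀ s : ℝ, 0 < s → ∀ i,
      0 < Matrix.vecMul α ((s • (1 : Matrix (Fin n) (Fin n) ℝ) - T)⁻¹) i)
    (πp : Fin n → ℝ) (hπp0 : 0 ≤ πp ⬝ᵥ t) (hπp : πp ⬝ᵥ t < lam / d)
    (πn : Fin n → ℝ)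
    (hπn : πn = lam • Matrix.vecMul α
      ((lam + q - d * (πp ⬝ᵥ t)) • (1 : Matrix (Fin n) (Fin n) ℝ) - d • T)⁻¹) :
    IsUnit ((lam + q - d * (πp ⬝ᵥ t)) • (1 : Matrix (Fin n) (Fin n) ℝ) - d • T) ∧
    (∀ i, 0 < πn i) ∧ 0 < πn ⬝ᵥ t ∧ πn ⬝ᵥ t < lam / d := by
  have hn : Nonempty (Fin n) := by
    by_contra h
    rw [not_nonempty_iff] at h
    simp [Finset.univ_eq_empty] at hα1
  -- positivity of the shift
  have hdx : d * (πp ⬝ᵥ t) < lam := by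
    have := (lt_div_iff₀ hd).mp hπp
    nlinarith
  have hvs : ∀ (c : ℝ) (A : Matrix (Fin n) (Fin n) ℝ) (v : Fin n → ℝ),
      v ᵥ* (c • A) = c • (v ᵥ* A) := by
    intro c A v
    ext i
    simp only [Matrix.vecMul, dotProduct, Matrix.smul_apply, Pi.smul_apply,
      smul_eq_mul, Finset.mul_sum]
    exact Finset.sum_congr rfl fun j _ => by ring
  have hdetmap : ∀ A : Matrix (Fin n) (Fin n) ℝ,
      (A.map (Complex.ofReal : ℝ → ℂ)).det = Complex.ofReal A.det := by
    intro A
    have h := RingHom.map_det Complex.ofRealHom A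
    exact h.symm
  set s : ℝ := lam + q - d * (πp ⬝ᵥ t) with hsdef
  have hs : 0 < s := by simp only [hsdef]; linarith
  set s' : ℝ := s / d with hs'def
  have hs' : 0 < s' := div_pos hs hd
  have hds' : d * s' = s := mul_div_cancel₀ s hd.ne'
  set M' : Matrix (Fin n) (Fin n) ℝ := s' • (1 : Matrix (Fin n) (Fin n) ℝ) - T with hM'def
  -- invertibility of M'
  have hdet : M'.det ≠ 0 := by
    intro h0
    have hmapeq : M'.map (Complex.ofReal : ℝ → ℂ)
        = (s' : ℂ) • (1 : Matrix (Fin n) (Fin n) ℂ) - T.map Complex.ofReal := by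
      ext i j
      by_cases hij : i = j <;>
        simp [hM'def, Matrix.map_apply, Matrix.one_apply, hij]
    have hC : ¬ IsUnit ((s' : ℂ) • (1 : Matrix (Fin n) (Fin n) ℂ) - T.map Complex.ofReal) := by
      rw [← hmapeq, Matrix.isUnit_iff_isUnit_det, hdetmap, h0]
      simp
    have hmem : (s' : ℂ) ∈ spectrum ℂ (T.map (Complex.ofReal : ℝ → ℂ)) := by
      rw [spectrum.mem_iff]
      simpa [Algebra.algebraMap_eq_smul_one] using hC
    have := heig _ hmem
    simp only [Complex.ofReal_re] at this
    linarith
  have hUdet : IsUnit M'.det := isUnit_iff_ne_zero.mpr hdet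
  -- the target matrix equals d • M'
  have hM : s • (1 : Matrix (Fin n) (Fin n) ℝ) - d • T = d • M' := by
    rw [hM'def, smul_sub, smul_smul, hds']
  have hUM : IsUnit (s • (1 : Matrix (Fin n) (Fin n) ℝ) - d • T) := by
    rw [hM, Matrix.isUnit_iff_isUnit_det, Matrix.det_smul]
    exact (isUnit_iff_ne_zero.mpr (pow_ne_zero _ hd.ne')).mul hUdet
  have hMinv : (s • (1 : Matrix (Fin n) (Fin n) ℝ) - d • T)⁻¹ = d⁻¹ • M'⁻¹ := by
    rw [hM]
    apply Matrix.inv_eq_right_inv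
    rw [Matrix.smul_mul, Matrix.mul_smul, Matrix.mul_nonsing_inv _ hUdet,
      smul_smul, mul_inv_cancel₀ hd.ne', one_smul]
  set β : Fin n → ℝ := Matrix.vecMul α M'⁻¹ with hβdef
  have hβ : ∀ i, 0 < β i := hirr s' hs'
  have hπnβ : πn = (lam / d) • β := by
    rw [hπn, hMinv, hvs, smul_smul, ← div_eq_mul_inv]
  -- nonnegativity of t
  have ht0 : ∀ i, 0 ≤ t i := by
    intro i
    have h1 : t i = -∑ j, T i j := by
      simp [ht, Matrix.mulVec, dotProduct]
    rw [h1]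
    linarith [hrow i]
  -- t is not identically zero
  have htne : ∃ i, 0 < t i := by
    by_contra h
    push_neg at h
    have ht0' : t = 0 := funext fun i => le_antisymm (h i) (ht0 i)
    have hT1 : T.mulVec 1 = 0 := by
      have h2 : (-T).mulVec 1 = 0 := ht ▸ ht0'
      rw [Matrix.neg_mulVec, neg_eq_zero] at h2
      exact h2
    have h1ne : (1 : Fin n → ℝ) ≠ 0 := by
      intro h0
      have := congrFun h0 (Classical.arbitrary (Fin n))
      simp at this
    have hdT : T.det = 0 := by
      rw [← Matrix.exists_mulVec_eq_zero_iff]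
      exact ⟨1, h1ne, hT1⟩
    have hmem : (0 : ℂ) ∈ spectrum ℂ (T.map (Complex.ofReal : ℝ → ℂ)) := by
      rw [spectrum.zero_mem_iff, Matrix.isUnit_iff_isUnit_det, hdetmap, hdT]
      simp
    have := heig _ hmem
    simp at this
  -- the key identity
  have hkey : β ⬝ᵥ t = 1 - s' * ∑ i, β i := by
    rw [ht, Matrix.dotProduct_mulVec]
    have h1 : Matrix.vecMul β (-T) = α - s' • β := by
      have h2 : -T = M' - s' • (1 : Matrix (Fin n) (Fin n) ℝ) := by
        rw [hM'def]; abel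
      rw [h2, Matrix.vecMul_sub, hvs, Matrix.vecMul_one, hβdef,
        Matrix.vecMul_vecMul, Matrix.nonsing_inv_mul _ hUdet, Matrix.vecMul_one]
    rw [h1, sub_dotProduct, smul_dotProduct]
    simp [dotProduct, hα1, smul_eq_mul]
  have hsumβ : 0 < ∑ i, β i :=
    Finset.sum_pos (fun i _ => hβ i) Finset.univ_nonempty
  have hβt0 : 0 < β ⬝ᵥ t := by
    obtain ⟨i, hi⟩ := htne
    have : ∀ j ∈ Finset.univ, 0 ≤ β j * t j :=
      fun j _ => mul_nonneg (hβ j).le (ht0 j)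
    exact Finset.sum_pos' this ⟨i, Finset.mem_univ i, mul_pos (hβ i) hi⟩
  have hβt1 : β ⬝ᵥ t < 1 := by
    rw [hkey]
    nlinarith
  have hld : 0 < lam / d := div_pos hlam hd
  refine ⟨hUM, ?_, ?_, ?_⟩
  · intro i
    rw [hπnβ]
    exact mul_pos hld (hβ i)
  · rw [hπnβ, smul_dotProduct, smul_eq_mul]
    exact mul_pos hld hβt0
  · rw [hπnβ, smul_dotProduct, smul_eq_mul]
    calc lam / d * (β ⬝ᵥ t) < lam / d * 1 := by
          exact mul_lt_mul_of_pos_left hβt1 hld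
      _ = lam / d := mul_one _
end

section
/- With the iteration π_n = λα((λ + q − d π_{n-1} t)I − dT)^{-1}: if π_{n-1} t > π_{n-2} t then π_n ≥ π_{n-1} entrywise, and if π_{n-1} t < π_{n-2} t then π_n ≤ π_{n-1} entrywise. Consequently the sequence (π_n)_{n≥1} is monotone (entrywise) and converges to a limit π* solving π*((λ + q − d π* t)I − dT) = λα. -/
open Matrix

open Filter Topology

lemma matpow_nonneg {n : ℕ} {B : Matrix (Fin n) (Fin n) ℝ} (hB : ∀ i j, 0 ≤ B i j) :
    ∀ k i j, 0 ≤ (B ^ k) i j := by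
  intro k
  induction k with
  | zero => intro i j; simp [Matrix.one_apply]; split <;> norm_num
  | succ k ih =>
    intro i j
    rw [pow_succ, Matrix.mul_apply]
    exact Finset.sum_nonneg fun l _ => mul_nonneg (ih i l) (hB l j)

lemma neumann {n : ℕ} (B : Matrix (Fin n) (Fin n) ℝ) (hB : ∀ i j, 0 ≤ B i j)
    (hrow : ∀ i, ∑ j, B i j < 1) : IsUnit (1 - B) ∧ ∀ i j, 0 ≤ (1 - B)⁻¹ i j := by
  letI : NormedRing (Matrix (Fin n) (Fin n) ℝ) := Matrix.linftyOpNormedRing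
  letI : NormedSpace ℝ (Matrix (Fin n) (Fin n) ℝ) := Matrix.linftyOpNormedSpace
  haveI : CompleteSpace (Matrix (Fin n) (Fin n) ℝ) := FiniteDimensional.complete ℝ _
  have hBnorm : ‖B‖ < 1 := by
    rw [Matrix.linfty_opNorm_def]
    have : ((Finset.univ : Finset (Fin n)).sup fun i => ∑ j, ‖B i j‖₊ : NNReal) < 1 := by
      rw [Finset.sup_lt_iff (by norm_num : (⊥ : NNReal) < 1)]
      intro i _
      have : ((∑ j, ‖B i j‖₊ : NNReal) : ℝ) < 1 := by
        push_cast
        have heq : ∑ j, ‖B i j‖ = ∑ j, B i j :=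
          Finset.sum_congr rfl fun j _ => by rw [Real.norm_eq_abs, abs_of_nonneg (hB i j)]
        rw [heq]; exact hrow i
      exact_mod_cast this
    exact_mod_cast this
  refine ⟨isUnit_one_sub_of_norm_lt_one hBnorm, fun i j => ?_⟩
  have hsum : HasSum (fun k => B ^ k) (Ring.inverse (1 - B)) :=
    hasSum_geom_series_inverse B hBnorm
  let el : Matrix (Fin n) (Fin n) ℝ →ₗ[ℝ] ℝ :=
    { toFun := fun M => M i j, map_add' := fun _ _ => rfl, map_smul' := fun _ _ => rfl }
  have hel : Continuous el := el.continuous_of_finiteDimensional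
  have h2 : HasSum (fun k => (B ^ k) i j) ((Ring.inverse (1 - B)) i j) :=
    hsum.map el.toAddMonoidHom hel
  rw [Matrix.nonsing_inv_eq_ringInverse]
  exact h2.nonneg fun k => matpow_nonneg hB k i j

lemma resolvent_pos {n : ℕ} {d : ℝ} {T : Matrix (Fin n) (Fin n) ℝ} (hd : 0 < d)
    (hoff : ∀ i j, i ≠ j → 0 ≤ T i j) (hrow : ∀ i, ∑ j, T i j ≤ 0) (x : ℝ) (hx : 0 < x) :
    IsUnit (x • (1 : Matrix (Fin n) (Fin n) ℝ) - d • T).det ∧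
      ∀ i j, 0 ≤ (x • (1 : Matrix (Fin n) (Fin n) ℝ) - d • T)⁻¹ i j := by
  set c : ℝ := d * (1 + ∑ i, |T i i|) with hcdef
  have hsumabs : (0:ℝ) ≤ ∑ i, |T i i| := Finset.sum_nonneg fun i _ => abs_nonneg _
  have hc : 0 < c := by positivity
  have hxc : 0 < x + c := by linarith
  set B : Matrix (Fin n) (Fin n) ℝ := d • T + c • 1 with hBdef
  set u : Matrix (Fin n) (Fin n) ℝ := (x + c)⁻¹ • B with hudef
  have hBnn : ∀ i j, 0 ≤ B i j := by
    intro i j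
    by_cases h : i = j
    · subst h
      have h1 : B i i = d * T i i + c := by
        simp [hBdef, Matrix.add_apply, Matrix.smul_apply, Matrix.one_apply, smul_eq_mul]
      have h2 : |T i i| ≤ 1 + ∑ k, |T k k| := by
        have := Finset.single_le_sum (f := fun k => |T k k|)
          (fun k _ => abs_nonneg _) (Finset.mem_univ i)
        linarith
      have h3 : -T i i ≤ 1 + ∑ k, |T k k| := le_trans (neg_le_abs _) h2
      rw [h1, hcdef]
      nlinarith
    · have h1 : B i j = d * T i j := by
        simp [hBdef, Matrix.add_apply, Matrix.smul_apply, Matrix.one_apply_ne h, smul_eq_mul]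
      rw [h1]
      exact mul_nonneg hd.le (hoff i j h)
  have hBrow : ∀ i, ∑ j, B i j ≤ c := by
    intro i
    have h1 : ∑ j, B i j = d * (∑ j, T i j) + c := by
      simp only [hBdef, Matrix.add_apply, Matrix.smul_apply, smul_eq_mul, Finset.sum_add_distrib]
      rw [← Finset.mul_sum]
      congr 1
      simp [Matrix.one_apply]
    rw [h1]
    nlinarith [hrow i]
  have hunn : ∀ i j, 0 ≤ u i j := fun i j => by
    have : u i j = (x + c)⁻¹ * B i j := rfl
    rw [this]; exact mul_nonneg (by positivity) (hBnn i j)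
  have hurow : ∀ i, ∑ j, u i j < 1 := by
    intro i
    have h1 : ∑ j, u i j = (x + c)⁻¹ * ∑ j, B i j := by
      rw [Finset.mul_sum]; rfl
    rw [h1]
    calc (x + c)⁻¹ * ∑ j, B i j ≤ (x + c)⁻¹ * c :=
          mul_le_mul_of_nonneg_left (hBrow i) (by positivity)
      _ < 1 := by rw [inv_mul_lt_one₀ hxc]; linarith
  obtain ⟨hu1, hu2⟩ := neumann u hunn hurow
  have hAeq : x • (1 : Matrix (Fin n) (Fin n) ℝ) - d • T = (x + c) • (1 - u) := by
    have h1 : (x + c) • u = B := by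
      rw [hudef, smul_smul, mul_inv_cancel₀ hxc.ne', one_smul]
    rw [smul_sub, h1, hBdef]
    module
  have hu1det : IsUnit (1 - u).det := (Matrix.isUnit_iff_isUnit_det _).mp hu1
  have hdet : IsUnit (x • (1 : Matrix (Fin n) (Fin n) ℝ) - d • T).det := by
    rw [hAeq, Matrix.det_smul]
    exact (isUnit_iff_ne_zero.mpr (by positivity)).mul hu1det
  refine ⟨hdet, fun i j => ?_⟩
  have hinv : (x • (1 : Matrix (Fin n) (Fin n) ℝ) - d • T)⁻¹ = (x + c)⁻¹ • (1 - u)⁻¹ := by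
    rw [hAeq]
    apply Matrix.inv_eq_left_inv
    rw [Matrix.smul_mul, Matrix.mul_smul, Matrix.nonsing_inv_mul _ hu1det, smul_smul,
      inv_mul_cancel₀ hxc.ne', one_smul]
  rw [hinv]
  have heval : ((x + c)⁻¹ • (1 - u)⁻¹) i j = (x + c)⁻¹ * (1 - u)⁻¹ i j := rfl
  rw [heval]
  exact mul_nonneg (by positivity) (hu2 i j)

lemma resolvent_unit {n : ℕ} {d : ℝ} {T : Matrix (Fin n) (Fin n) ℝ} (hd : 0 < d)
    (heig : ∀ μ ∈ spectrum ℂ (T.map (Complex.ofReal : ℝ → ℂ)), μ.re < 0)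
    (x : ℝ) (hx : 0 ≤ x) :
    IsUnit (x • (1 : Matrix (Fin n) (Fin n) ℝ) - d • T).det := by
  by_contra h
  have hdet0 : (x • (1 : Matrix (Fin n) (Fin n) ℝ) - d • T).det = 0 := by
    simpa [isUnit_iff_ne_zero] using h
  set Tc : Matrix (Fin n) (Fin n) ℂ := T.map (Complex.ofReal : ℝ → ℂ) with hTc
  have h1 : ((x • (1 : Matrix (Fin n) (Fin n) ℝ) - d • T).map (Complex.ofRealHom : ℝ →+* ℂ))
      = (x : ℂ) • (1 : Matrix (Fin n) (Fin n) ℂ) - (d : ℂ) • Tc := by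
    ext i j
    simp only [Matrix.map_apply, Matrix.sub_apply, Matrix.smul_apply, Matrix.one_apply, hTc,
      smul_eq_mul, apply_ite, Complex.ofRealHom_eq_coe]
    push_cast
    split <;> ring_nf <;> simp
  have h2 : ((x : ℂ) • (1 : Matrix (Fin n) (Fin n) ℂ) - (d : ℂ) • Tc).det = 0 := by
    rw [← h1]
    have : (x • (1 : Matrix (Fin n) (Fin n) ℝ) - d • T).map (Complex.ofRealHom : ℝ →+* ℂ)
        = (Complex.ofRealHom : ℝ →+* ℂ).mapMatrix (x • 1 - d • T) := rfl
    rw [this, ← RingHom.map_det, hdet0, map_zero]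
  have hscal : (d : ℂ) * (((x / d : ℝ) : ℂ)) = (x : ℂ) := by
    rw [← Complex.ofReal_mul, mul_div_cancel₀ _ hd.ne']
  have h3 : (x : ℂ) • (1 : Matrix (Fin n) (Fin n) ℂ) - (d : ℂ) • Tc
      = (d : ℂ) • ((((x / d : ℝ) : ℂ)) • 1 - Tc) := by
    rw [smul_sub, smul_smul, hscal]
  have h4 : ((((x / d : ℝ) : ℂ)) • (1 : Matrix (Fin n) (Fin n) ℂ) - Tc).det = 0 := by
    have hd' : ((d : ℂ)) ^ n ≠ 0 := pow_ne_zero _ (by exact_mod_cast hd.ne')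
    rw [h3, Matrix.det_smul] at h2
    simp only [Fintype.card_fin] at h2
    exact (mul_eq_zero.mp h2).resolve_left hd'
  have hz : (((x / d : ℝ) : ℂ)) ∈ spectrum ℂ Tc := by
    rw [spectrum.mem_iff]
    rw [Algebra.algebraMap_eq_smul_one]
    rw [Matrix.isUnit_iff_isUnit_det, h4]
    simp
  have := heig _ hz
  rw [Complex.ofReal_re] at this
  exact absurd this (not_lt.mpr (div_nonneg hx hd.le))

theorem stmt14 (n : ℕ) (d lam q : ℝ) (hd : 0 < d) (hlam : 0 < lam) (hq : 0 ≤ q)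
    (T : Matrix (Fin n) (Fin n) ℝ)
    (hoff : ∀ i j, i ≠ j → 0 ≤ T i j) (hrow : ∀ i, ∑ j, T i j ≤ 0)
    (heig : ∀ μ ∈ spectrum ℂ (T.map (Complex.ofReal : ℝ → ℂ)), μ.re < 0)
    (α : Fin n → ℝ) (hα0 : ∀ i, 0 ≤ α i) (hα1 : ∑ i, α i = 1)
    (t : Fin n → ℝ) (ht : t = (-T).mulVec 1)
    (π : ℕ → Fin n → ℝ)
    (hrec : ∀ m : ℕ, π (m + 1) = lam • Matrix.vecMul α
      ((lam + q - d * (π m ⬝ᵥ t)) • (1 : Matrix (Fin n) (Fin n) ℝ) - d • T)⁻¹)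
    (hbd : ∀ m : ℕ, 0 ≤ π m ⬝ᵥ t ∧ π m ⬝ᵥ t < lam / d) :
    (∀ m : ℕ, π (m + 1) ⬝ᵥ t > π m ⬝ᵥ t → ∀ i, π (m + 1) i ≤ π (m + 2) i) ∧
    (∀ m : ℕ, π (m + 1) ⬝ᵥ t < π m ⬝ᵥ t → ∀ i, π (m + 2) i ≤ π (m + 1) i) ∧
    ((∀ i, Monotone (fun m : ℕ => π (m + 1) i)) ∨
      (∀ i, Antitone (fun m : ℕ => π (m + 1) i))) ∧
    ∃ πs : Fin n → ℝ, Tendsto π atTop (𝓝 πs) ∧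
      Matrix.vecMul πs
        ((lam + q - d * (πs ⬝ᵥ t)) • (1 : Matrix (Fin n) (Fin n) ℝ) - d • T) = lam • α := by
  -- abbreviation for the resolvent family
  have hunit : ∀ x : ℝ, 0 ≤ x →
      IsUnit (x • (1 : Matrix (Fin n) (Fin n) ℝ) - d • T).det :=
    fun x hx => resolvent_unit hd heig x hx
  -- continuity of the resolvent
  have hcontA : Continuous (fun y : ℝ => y • (1 : Matrix (Fin n) (Fin n) ℝ) - d • T) :=
    (continuous_id.smul continuous_const).sub continuous_const
  have hcont : ∀ x : ℝ, 0 ≤ x →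
      ContinuousAt (fun y : ℝ => (y • (1 : Matrix (Fin n) (Fin n) ℝ) - d • T)⁻¹) x := by
    intro x hx
    have hfun : (fun y : ℝ => (y • (1 : Matrix (Fin n) (Fin n) ℝ) - d • T)⁻¹)
        = fun y : ℝ => ((y • (1 : Matrix (Fin n) (Fin n) ℝ) - d • T).det)⁻¹ •
            (y • (1 : Matrix (Fin n) (Fin n) ℝ) - d • T).adjugate := by
      funext y
      rw [Matrix.inv_def, Ring.inverse_eq_inv']
    rw [hfun]
    have hdet : ContinuousAt (fun y : ℝ =>
        (y • (1 : Matrix (Fin n) (Fin n) ℝ) - d • T).det) x :=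
      (hcontA.matrix_det).continuousAt
    have hdet0 : (x • (1 : Matrix (Fin n) (Fin n) ℝ) - d • T).det ≠ 0 :=
      (hunit x hx).ne_zero
    exact (hdet.inv₀ hdet0).smul (hcontA.matrix_adjugate).continuousAt
  -- nonnegativity of the resolvent for x ≥ 0
  have hnn : ∀ x : ℝ, 0 ≤ x → ∀ i j,
      0 ≤ (x • (1 : Matrix (Fin n) (Fin n) ℝ) - d • T)⁻¹ i j := by
    intro x hx i j
    rcases hx.lt_or_eq with h | h
    · exact (resolvent_pos hd hoff hrow x h).2 i j
    · have hseq : Tendsto (fun k : ℕ => x + 1 / (k + 1)) atTop (𝓝 x) := by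
        have h0 : Tendsto (fun _ : ℕ => x) atTop (𝓝 x) := tendsto_const_nhds
        simpa using h0.add tendsto_one_div_add_atTop_nhds_zero_nat
      have h1 : Tendsto (fun k : ℕ =>
          ((x + 1 / (k + 1)) • (1 : Matrix (Fin n) (Fin n) ℝ) - d • T)⁻¹) atTop
          (𝓝 ((x • (1 : Matrix (Fin n) (Fin n) ℝ) - d • T)⁻¹)) :=
        ((hcont x hx).tendsto).comp hseq
      have h2 : Tendsto (fun k : ℕ =>
          ((x + 1 / (k + 1)) • (1 : Matrix (Fin n) (Fin n) ℝ) - d • T)⁻¹ i j) atTop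
          (𝓝 ((x • (1 : Matrix (Fin n) (Fin n) ℝ) - d • T)⁻¹ i j)) :=
        ((((continuous_apply (A := fun _ : Fin n => ℝ) j).comp
          (continuous_apply i)).tendsto _).comp h1 : )
      refine ge_of_tendsto' h2 fun k => ?_
      have hpos : 0 < x + 1 / (k + 1) := by
        rw [← h]
        positivity
      exact (resolvent_pos hd hoff hrow _ hpos).2 i j
  -- entrywise monotonicity of the resolvent
  have hmono : ∀ x y : ℝ, 0 ≤ x → x ≤ y → ∀ i j,
      (y • (1 : Matrix (Fin n) (Fin n) ℝ) - d • T)⁻¹ i j ≤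
        (x • (1 : Matrix (Fin n) (Fin n) ℝ) - d • T)⁻¹ i j := by
    intro x y hx hxy i j
    have hy : (0:ℝ) ≤ y := le_trans hx hxy
    set Ax := x • (1 : Matrix (Fin n) (Fin n) ℝ) - d • T with hAx
    set Ay := y • (1 : Matrix (Fin n) (Fin n) ℝ) - d • T with hAy
    have h1 : Ay = Ax + (y - x) • (1 : Matrix (Fin n) (Fin n) ℝ) := by
      rw [hAx, hAy]; module
    have hid : Ax⁻¹ = Ay⁻¹ + (y - x) • (Ax⁻¹ * Ay⁻¹) := by
      calc Ax⁻¹ = Ax⁻¹ * (Ay * Ay⁻¹) := by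
            rw [Matrix.mul_nonsing_inv _ (hunit y hy), Matrix.mul_one]
        _ = (Ax⁻¹ * Ay) * Ay⁻¹ := by rw [Matrix.mul_assoc]
        _ = (Ax⁻¹ * (Ax + (y - x) • (1 : Matrix (Fin n) (Fin n) ℝ))) * Ay⁻¹ := by rw [← h1]
        _ = (1 + (y - x) • Ax⁻¹) * Ay⁻¹ := by
            rw [Matrix.mul_add, Matrix.nonsing_inv_mul _ (hunit x hx), Matrix.mul_smul,
              Matrix.mul_one]
        _ = Ay⁻¹ + (y - x) • (Ax⁻¹ * Ay⁻¹) := by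
            rw [Matrix.add_mul, Matrix.one_mul, Matrix.smul_mul]
    have hprod : 0 ≤ (Ax⁻¹ * Ay⁻¹) i j := by
      rw [Matrix.mul_apply]
      exact Finset.sum_nonneg fun l _ => mul_nonneg (hnn x hx i l) (hnn y hy l j)
    have := congrFun (congrFun hid i) j
    rw [Matrix.add_apply, Matrix.smul_apply, smul_eq_mul] at this
    nlinarith [this]
  -- nonnegativity of t
  have ht0 : ∀ i, 0 ≤ t i := by
    intro i
    have h1 : t i = -∑ j, T i j := by
      rw [ht]
      simp [Matrix.mulVec, dotProduct, Matrix.neg_apply]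
    rw [h1]
    linarith [hrow i]
  -- dot product monotonicity
  have hdot : ∀ a b : ℕ, (∀ i, π a i ≤ π b i) → π a ⬝ᵥ t ≤ π b ⬝ᵥ t := by
    intro a b h
    exact Finset.sum_le_sum fun i _ => mul_le_mul_of_nonneg_right (h i) (ht0 i)
  -- positivity of the shift
  have hσpos : ∀ m : ℕ, 0 < lam + q - d * (π m ⬝ᵥ t) := by
    intro m
    have h2 := (hbd m).2
    have : d * (π m ⬝ᵥ t) < lam := by
      rw [lt_div_iff₀ hd] at h2
      linarith [h2]
    linarith
  -- the key comparison lemma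
  have key : ∀ a b : ℕ, π a ⬝ᵥ t ≤ π b ⬝ᵥ t → ∀ i, π (a + 1) i ≤ π (b + 1) i := by
    intro a b hab i
    rw [hrec a, hrec b]
    have hxb : 0 < lam + q - d * (π b ⬝ᵥ t) := hσpos b
    have hxba : lam + q - d * (π b ⬝ᵥ t) ≤ lam + q - d * (π a ⬝ᵥ t) := by nlinarith
    have hRle : ∀ j i', ((lam + q - d * (π a ⬝ᵥ t)) •
          (1 : Matrix (Fin n) (Fin n) ℝ) - d • T)⁻¹ j i' ≤
        ((lam + q - d * (π b ⬝ᵥ t)) • (1 : Matrix (Fin n) (Fin n) ℝ) - d • T)⁻¹ j i' :=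
      fun j i' => hmono _ _ hxb.le hxba j i'
    simp only [Pi.smul_apply, smul_eq_mul]
    apply mul_le_mul_of_nonneg_left _ hlam.le
    simp only [Matrix.vecMul, dotProduct]
    exact Finset.sum_le_sum fun j _ => mul_le_mul_of_nonneg_left (hRle j i) (hα0 j)
  -- part 1 and part 2
  have part1 : ∀ m : ℕ, π (m + 1) ⬝ᵥ t > π m ⬝ᵥ t → ∀ i, π (m + 1) i ≤ π (m + 2) i :=
    fun m h i => key m (m + 1) (le_of_lt h) i
  have part2 : ∀ m : ℕ, π (m + 1) ⬝ᵥ t < π m ⬝ᵥ t → ∀ i, π (m + 2) i ≤ π (m + 1) i :=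
    fun m h i => key (m + 1) m (le_of_lt h) i
  -- monotone or antitone
  have hor : (∀ i, Monotone (fun m : ℕ => π (m + 1) i)) ∨
      (∀ i, Antitone (fun m : ℕ => π (m + 1) i)) := by
    rcases le_total (π 0 ⬝ᵥ t) (π 1 ⬝ᵥ t) with hc | hc
    · left
      have hstep : ∀ m : ℕ, π m ⬝ᵥ t ≤ π (m + 1) ⬝ᵥ t := by
        intro m
        induction m with
        | zero => exact hc
        | succ m ih => exact hdot _ _ (key m (m + 1) ih)
      exact fun i => monotone_nat_of_le_succ fun m => key m (m + 1) (hstep m) i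
    · right
      have hstep : ∀ m : ℕ, π (m + 1) ⬝ᵥ t ≤ π m ⬝ᵥ t := by
        intro m
        induction m with
        | zero => exact hc
        | succ m ih => exact hdot _ _ (key (m + 1) m ih)
      exact fun i => antitone_nat_of_succ_le fun m => key (m + 1) m (hstep m) i
  -- lower and upper bounds
  have hlb : ∀ m i, 0 ≤ π (m + 1) i := by
    intro m i
    rw [hrec m]
    simp only [Pi.smul_apply, smul_eq_mul]
    apply mul_nonneg hlam.le
    simp only [Matrix.vecMul, dotProduct]
    exact Finset.sum_nonneg fun j _ => mul_nonneg (hα0 j) (hnn _ (hσpos m).le j i)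
  have hub : ∀ m i, π (m + 1) i ≤
      lam * ∑ j, α j * ((0:ℝ) • (1 : Matrix (Fin n) (Fin n) ℝ) - d • T)⁻¹ j i := by
    intro m i
    rw [hrec m]
    simp only [Pi.smul_apply, smul_eq_mul]
    apply mul_le_mul_of_nonneg_left _ hlam.le
    simp only [Matrix.vecMul, dotProduct]
    exact Finset.sum_le_sum fun j _ =>
      mul_le_mul_of_nonneg_left (hmono 0 _ le_rfl (hσpos m).le j i) (hα0 j)
  -- convergence of each coordinate
  have hex : ∀ i, ∃ L, Tendsto (fun m : ℕ => π (m + 1) i) atTop (𝓝 L) := by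
    rcases hor with hmon | hant
    · intro i
      refine ⟨_, tendsto_atTop_ciSup (hmon i) ?_⟩
      refine ⟨lam * ∑ j, α j * ((0:ℝ) • (1 : Matrix (Fin n) (Fin n) ℝ) - d • T)⁻¹ j i, ?_⟩
      rintro y ⟨m, rfl⟩
      exact hub m i
    · intro i
      refine ⟨_, tendsto_atTop_ciInf (hant i) ?_⟩
      refine ⟨0, ?_⟩
      rintro y ⟨m, rfl⟩
      exact hlb m i
  choose πs hπs using hex
  have hconv1 : Tendsto (fun m : ℕ => π (m + 1)) atTop (𝓝 πs) := tendsto_pi_nhds.mpr hπs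
  have hconv : Tendsto π atTop (𝓝 πs) := (tendsto_add_atTop_iff_nat 1).mp hconv1
  -- limit of dot products
  have hdott : Tendsto (fun m : ℕ => π m ⬝ᵥ t) atTop (𝓝 (πs ⬝ᵥ t)) := by
    have hco : ∀ i, Tendsto (fun m : ℕ => π m i) atTop (𝓝 (πs i)) :=
      fun i => ((continuous_apply i).tendsto _).comp hconv
    simp only [dotProduct]
    exact tendsto_finset_sum _ fun i _ => (hco i).mul tendsto_const_nhds
  have hπt_le : πs ⬝ᵥ t ≤ lam / d :=
    le_of_tendsto hdott (Eventually.of_forall fun m => (hbd m).2.le)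
  have hxinf : 0 ≤ lam + q - d * (πs ⬝ᵥ t) := by
    have h1 : (πs ⬝ᵥ t) * d ≤ lam := (le_div_iff₀ hd).mp hπt_le
    nlinarith
  have hσtend : Tendsto (fun m : ℕ => lam + q - d * (π m ⬝ᵥ t)) atTop
      (𝓝 (lam + q - d * (πs ⬝ᵥ t))) :=
    tendsto_const_nhds.sub (tendsto_const_nhds.mul hdott)
  have hRtend : Tendsto (fun m : ℕ =>
      ((lam + q - d * (π m ⬝ᵥ t)) • (1 : Matrix (Fin n) (Fin n) ℝ) - d • T)⁻¹) atTop
      (𝓝 (((lam + q - d * (πs ⬝ᵥ t)) • (1 : Matrix (Fin n) (Fin n) ℝ) - d • T)⁻¹)) :=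
    ((hcont _ hxinf).tendsto).comp hσtend
  have hF : Continuous (fun M : Matrix (Fin n) (Fin n) ℝ => lam • Matrix.vecMul α M) := by
    apply continuous_pi
    intro i
    simp only [Pi.smul_apply, Matrix.vecMul, dotProduct, smul_eq_mul]
    exact continuous_const.mul (continuous_finset_sum _ fun j _ =>
      continuous_const.mul ((continuous_apply i).comp (continuous_apply j)))
  have hπtend2 : Tendsto (fun m : ℕ => π (m + 1)) atTop
      (𝓝 (lam • Matrix.vecMul α
        (((lam + q - d * (πs ⬝ᵥ t)) • (1 : Matrix (Fin n) (Fin n) ℝ) - d • T)⁻¹))) := by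
    have h1 := (hF.tendsto _).comp hRtend
    have h2 : ((fun M : Matrix (Fin n) (Fin n) ℝ => lam • Matrix.vecMul α M) ∘ fun m : ℕ =>
        ((lam + q - d * (π m ⬝ᵥ t)) • (1 : Matrix (Fin n) (Fin n) ℝ) - d • T)⁻¹)
        = fun m : ℕ => π (m + 1) := funext fun m => (hrec m).symm
    rwa [h2] at h1
  have hπs_eq : πs = lam • Matrix.vecMul α
      (((lam + q - d * (πs ⬝ᵥ t)) • (1 : Matrix (Fin n) (Fin n) ℝ) - d • T)⁻¹) :=
    tendsto_nhds_unique hconv1 hπtend2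
  refine ⟨part1, part2, hor, πs, hconv, ?_⟩
  nth_rewrite 1 [hπs_eq]
  rw [Matrix.smul_vecMul, Matrix.vecMul_vecMul,
    Matrix.nonsing_inv_mul _ (hunit _ hxinf), Matrix.vecMul_one]
end

section
/- Let σ > 0, d ∈ ℝ, λ > 0, q = 0, and suppose a = 2d/σ² > 0 and row vector b = (2λ/σ²)α(−T)^{-1} ≥ 0. Then the pair (a, b) solves the equations (σ²/2)(a² + b t) − d a = λ and (σ²/2)(b T − a b) + d b = −λ α. -/
open Matrix

theorem stmt19 (n : ℕ) (σ d lam : ℝ) (hσ : 0 < σ) (hlam : 0 < lam)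
    (T : Matrix (Fin n) (Fin n) ℝ) (hinv : IsUnit T)
    (α : Fin n → ℝ) (hα0 : ∀ i, 0 ≤ α i) (hα1 : ∑ i, α i = 1)
    (t : Fin n → ℝ) (ht : t = (-T).mulVec 1)
    (a : ℝ) (ha : a = 2 * d / σ ^ 2) (ha0 : 0 < a)
    (b : Fin n → ℝ) (hb : b = (2 * lam / σ ^ 2) • Matrix.vecMul α (-T)⁻¹)
    (hb0 : ∀ i, 0 ≤ b i) :
    σ ^ 2 / 2 * (a ^ 2 + b ⬝ᵥ t) - d * a = lam ∧
    (σ ^ 2 / 2) • (Matrix.vecMul b T - a • b) + d • b = -(lam • α) := by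
  have hσ2 : (σ : ℝ) ^ 2 ≠ 0 := by positivity
  have hda : σ ^ 2 / 2 * a = d := by
    rw [ha]; field_simp
  have hTdet : IsUnit (-T).det := (Matrix.isUnit_iff_isUnit_det _).mp hinv.neg
  have hinvmul : (-T)⁻¹ * (-T) = 1 := Matrix.nonsing_inv_mul _ hTdet
  have hbt : b ⬝ᵥ t = 2 * lam / σ ^ 2 := by
    rw [hb, ht, smul_dotProduct, Matrix.dotProduct_mulVec,
      Matrix.vecMul_vecMul, hinvmul, Matrix.vecMul_one, smul_eq_mul]
    have : α ⬝ᵥ (1 : Fin n → ℝ) = ∑ i, α i := by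
      simp [dotProduct]
    rw [this, hα1, mul_one]
  constructor
  · rw [hbt]
    have : σ ^ 2 / 2 * (a ^ 2 + 2 * lam / σ ^ 2) - d * a
        = (σ ^ 2 / 2 * a) * a + σ ^ 2 / 2 * (2 * lam / σ ^ 2) - d * a := by ring
    rw [this, hda]
    field_simp
    ring
  · have hbT : Matrix.vecMul b T = -((2 * lam / σ ^ 2) • α) := by
      rw [hb]
      rw [Matrix.smul_vecMul, Matrix.vecMul_vecMul]
      have : (-T)⁻¹ * T = -(1 : Matrix (Fin n) (Fin n) ℝ) := by
        have := hinvmul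
        rw [Matrix.mul_neg] at this
        exact neg_eq_iff_eq_neg.mp this
      rw [this]
      rw [Matrix.vecMul_neg, Matrix.vecMul_one, smul_neg]
    rw [hbT]
    funext i
    simp only [Pi.add_apply, Pi.smul_apply, Pi.sub_apply, Pi.neg_apply, smul_eq_mul]
    have hbi : b i = 2 * lam / σ ^ 2 * ((Matrix.vecMul α (-T)⁻¹) i) := by
      rw [hb]; simp
    have hc : σ ^ 2 / 2 * (2 * lam / σ ^ 2) = lam := by field_simp
    linear_combination (-(b i)) * hda + (-(α i)) * hc
end
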